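/- arXiv:1401.4741 — 3 statements merged into one kernel-verified Lean document; each statement's English description precedes it below -/
import Mathlib

section
/- There exists a constant C > 0 such that for every u in the space B = {u ∈ L²(0,∞) : u'' ∈ L², t·u ∈ L²}, one has ‖u‖_B ≤ C (‖u‖_{L²} + ‖(D_t² + t)u‖_{L²}), where ‖u‖_B = ‖D_t² u‖ + ‖t u‖ + ‖u‖. -/
open MeasureTheory Set
open scoped ENNReal


/-- The `L²(0,∞)` norm of a function. -/
noncomputable def L2norm (f : ℝ → ℂ) : ℝ :=
  Real.sqrt (∫ t in Ioi (0:ℝ), ‖f t‖ ^ 2)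


private lemma sqrt_add_le' {x y : ℝ} (hx : 0 ≤ x) (hy : 0 ≤ y) :
    Real.sqrt (x + y) ≤ Real.sqrt x + Real.sqrt y := by
  have h : x + y ≤ (Real.sqrt x + Real.sqrt y) ^ 2 := by
    have hx' := Real.sq_sqrt hx
    have hy' := Real.sq_sqrt hy
    nlinarith [Real.sqrt_nonneg x, Real.sqrt_nonneg y]
  calc Real.sqrt (x + y) ≤ Real.sqrt ((Real.sqrt x + Real.sqrt y) ^ 2) := Real.sqrt_le_sqrt h
    _ = _ := Real.sqrt_sq (by positivity)

/-- Cauchy–Schwarz for interval integrals of continuous nonnegative functions. -/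

private lemma cs_interval {f g : ℝ → ℝ} {a b : ℝ} (hab : a ≤ b)
    (hf : Continuous f) (hg : Continuous g)
    (hf0 : ∀ t, 0 ≤ f t) (hg0 : ∀ t, 0 ≤ g t) :
    ∫ t in a..b, f t * g t ≤
      Real.sqrt (∫ t in a..b, f t ^ 2) * Real.sqrt (∫ t in a..b, g t ^ 2) := by
  set X := ∫ t in a..b, f t ^ 2 with hX
  set Y := ∫ t in a..b, g t ^ 2 with hY
  set Z := ∫ t in a..b, f t * g t with hZ
  have hfi : IntervalIntegrable (fun t => f t ^ 2) volume a b :=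
    ((hf.pow 2).intervalIntegrable _ _)
  have hgi : IntervalIntegrable (fun t => g t ^ 2) volume a b :=
    ((hg.pow 2).intervalIntegrable _ _)
  have hfgi : IntervalIntegrable (fun t => f t * g t) volume a b :=
    ((hf.mul hg).intervalIntegrable _ _)
  have key : ∀ l : ℝ, 0 ≤ l ^ 2 * X - 2 * l * Z + Y := by
    intro l
    have h0 : (0:ℝ) ≤ ∫ t in a..b, (l * f t - g t) ^ 2 :=
      intervalIntegral.integral_nonneg hab fun t _ => sq_nonneg _
    have heq : (∫ t in a..b, (l * f t - g t) ^ 2)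
        = l ^ 2 * X - 2 * l * Z + Y := by
      have hrw : (fun t => (l * f t - g t) ^ 2)
          = fun t => l ^ 2 * f t ^ 2 - 2 * l * (f t * g t) + g t ^ 2 := by
        funext t; ring
      rw [hrw, intervalIntegral.integral_add ((hfi.const_mul _).sub (hfgi.const_mul _)) hgi,
        intervalIntegral.integral_sub (hfi.const_mul _) (hfgi.const_mul _),
        intervalIntegral.integral_const_mul, intervalIntegral.integral_const_mul]
    linarith [heq ▸ h0]
  have hZ0 : 0 ≤ Z := intervalIntegral.integral_nonneg hab fun t _ => mul_nonneg (hf0 t) (hg0 t)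
  have hX0 : 0 ≤ X := intervalIntegral.integral_nonneg hab fun t _ => sq_nonneg _
  have hY0 : 0 ≤ Y := intervalIntegral.integral_nonneg hab fun t _ => sq_nonneg _
  have hZ2 : Z ^ 2 ≤ X * Y := by
    rcases eq_or_lt_of_le hX0 with h | h
    · have hZ0' : Z = 0 := by
        by_contra hc
        have hZpos : 0 < Z := lt_of_le_of_ne hZ0 (Ne.symm hc)
        have hk := key ((Y + 1) / Z)
        rw [← h] at hk
        have : ((Y + 1) / Z) * Z = Y + 1 := div_mul_cancel₀ _ (ne_of_gt hZpos)
        nlinarith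
      rw [hZ0']
      nlinarith
    · have hk := key (Z / X)
      have hX' : X ≠ 0 := ne_of_gt h
      have h1 : (Z / X) ^ 2 * X = Z ^ 2 / X := by field_simp
      have h2 : 2 * (Z / X) * Z = 2 * (Z ^ 2 / X) := by field_simp
      rw [h1, h2] at hk
      have : Z ^ 2 / X ≤ Y := by linarith
      calc Z ^ 2 = (Z ^ 2 / X) * X := by field_simp
        _ ≤ Y * X := mul_le_mul_of_nonneg_right this (le_of_lt h)
        _ = X * Y := mul_comm _ _
  calc Z = Real.sqrt (Z ^ 2) := (Real.sqrt_sq hZ0).symm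
    _ ≤ Real.sqrt (X * Y) := Real.sqrt_le_sqrt hZ2
    _ = _ := Real.sqrt_mul hX0 _

private lemma hasDerivAt_g (u u1 u2 : ℝ → ℂ) (hD1 : ∀ t, HasDerivAt u (u1 t) t)
    (hD2 : ∀ t, HasDerivAt u1 (u2 t) t) (t : ℝ) :
    HasDerivAt (fun t => 2 * t * ((starRingEnd ℂ) (u1 t) * u t).re - ‖u t‖ ^ 2)
      (2 * t * ((starRingEnd ℂ) (u2 t) * u t).re + 2 * (t * ‖u1 t‖ ^ 2)) t := by
  have hb : ∀ s, HasDerivAt (fun t => (starRingEnd ℂ) (u1 t) * u t)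
      ((starRingEnd ℂ) (u2 s) * u s + (starRingEnd ℂ) (u1 s) * u1 s) s := fun s =>
    ((hD2 s).star).mul (hD1 s)
  have hH : HasDerivAt (fun t : ℝ => ((2 * t : ℝ) : ℂ) * ((starRingEnd ℂ) (u1 t) * u t)
        - (starRingEnd ℂ) (u t) * u t)
      (((2:ℝ):ℂ) * ((starRingEnd ℂ) (u1 t) * u t)
        + ((2 * t : ℝ):ℂ) * ((starRingEnd ℂ) (u2 t) * u t + (starRingEnd ℂ) (u1 t) * u1 t)
        - ((starRingEnd ℂ) (u1 t) * u t + (starRingEnd ℂ) (u t) * u1 t)) t := by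
    have ha : HasDerivAt (fun t : ℝ => ((2 * t : ℝ) : ℂ)) (((2:ℝ)):ℂ) t := by
      simpa using ((hasDerivAt_id t).const_mul (2:ℝ)).ofReal_comp
    exact (ha.mul (hb t)).sub (((hD1 t).star).mul (hD1 t))
  have hre := Complex.reCLM.hasFDerivAt.comp_hasDerivAt t hH
  have hfun : (fun t : ℝ => Complex.reCLM (((2 * t : ℝ) : ℂ) * ((starRingEnd ℂ) (u1 t) * u t)
        - (starRingEnd ℂ) (u t) * u t))
      = fun t => 2 * t * ((starRingEnd ℂ) (u1 t) * u t).re - ‖u t‖ ^ 2 := by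
    funext s
    simp only [Complex.reCLM_apply, Complex.sub_re, Complex.mul_re, Complex.ofReal_re,
      Complex.ofReal_im, Complex.conj_re, Complex.conj_im, Complex.sq_norm, Complex.normSq_apply]
    ring
  simp only [Function.comp_def] at hre
  rw [hfun] at hre
  refine hre.congr_deriv ?_
  simp only [Complex.reCLM_apply, Complex.sub_re, Complex.add_re, Complex.mul_re,
    Complex.ofReal_re, Complex.ofReal_im, Complex.conj_re, Complex.conj_im,
    Complex.sq_norm, Complex.normSq_apply]
  ring

private lemma hasDerivAt_normsq (u u1 : ℝ → ℂ) (hD1 : ∀ t, HasDerivAt u (u1 t) t) (t : ℝ) :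
    HasDerivAt (fun t => ‖u t‖ ^ 2) (2 * ((starRingEnd ℂ) (u1 t) * u t).re) t := by
  have hH := ((hD1 t).star).mul (hD1 t)
  have hre := Complex.reCLM.hasFDerivAt.comp_hasDerivAt t hH
  simp only [Function.comp_def, Pi.mul_apply] at hre
  have hfun : (fun x : ℝ => Complex.reCLM (star (u x) * u x))
      = fun t => ‖u t‖ ^ 2 := by
    funext s
    simp only [Complex.reCLM_apply, Complex.star_def, Complex.mul_re, Complex.conj_re,
      Complex.conj_im, Complex.sq_norm, Complex.normSq_apply]
    ring
  rw [hfun] at hre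
  refine hre.congr_deriv ?_
  simp only [Complex.reCLM_apply, Complex.star_def, Complex.add_re, Complex.mul_re,
    Complex.conj_re, Complex.conj_im]
  ring

private lemma taylor_u0 (u u1 u2 : ℝ → ℂ) (hD1 : ∀ t, HasDerivAt u (u1 t) t)
    (hD2 : ∀ t, HasDerivAt u1 (u2 t) t) (hu2c : Continuous u2) (t : ℝ) :
    u 0 = u t - (t:ℂ) * u1 t + ∫ s in (0:ℝ)..t, (s:ℂ) * u2 s := by
  set ψ : ℝ → ℂ := fun t => u t - (t:ℂ) * u1 t + ∫ s in (0:ℝ)..t, (s:ℂ) * u2 s with hψdef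
  have hc : Continuous fun s : ℝ => (s:ℂ) * u2 s := Complex.continuous_ofReal.mul hu2c
  have hψ : ∀ x, HasDerivAt ψ 0 x := by
    intro x
    have hI : HasDerivAt (fun t => ∫ s in (0:ℝ)..t, (s:ℂ) * u2 s) ((x:ℂ) * u2 x) x :=
      (hc.integral_hasStrictDerivAt 0 x).hasDerivAt
    have hid : HasDerivAt (fun t : ℝ => ((t:ℝ):ℂ)) (((1:ℝ)):ℂ) x := by
      simpa using (hasDerivAt_id x).ofReal_comp
    have hsub : HasDerivAt (fun t : ℝ => (t:ℂ) * u1 t)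
        (((1:ℝ):ℂ) * u1 x + (x:ℂ) * u2 x) x := hid.mul (hD2 x)
    have := ((hD1 x).sub hsub).add hI
    exact this.congr_deriv (by push_cast; ring)
  have hconst : ψ t = ψ 0 :=
    is_const_of_deriv_eq_zero (fun x => (hψ x).differentiableAt) (fun x => (hψ x).deriv) t 0
  have h0 : ψ 0 = u 0 := by simp [hψdef]
  rw [← h0, ← hconst]

private lemma freq_small (u u1 : ℝ → ℂ) (hD1 : ∀ t, HasDerivAt u (u1 t) t)
    (huc : Continuous u) (hu1c : Continuous u1)
    (hU : IntegrableOn (fun t => ‖u t‖ ^ 2) (Ioi (0:ℝ)))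
    {ε : ℝ} (hε : 0 < ε) (R₀ : ℝ) :
    ∃ R, R₀ ≤ R ∧ 1/2 ≤ R ∧ 2 * R * ((starRingEnd ℂ) (u1 R) * u R).re - ‖u R‖ ^ 2 < ε := by
  by_contra hcon
  push_neg at hcon
  set S := max R₀ 1 with hSdef
  have hS1 : (1:ℝ) ≤ S := le_max_right _ _
  have hS0 : (0:ℝ) < S := by linarith
  have hg : ∀ t, S ≤ t → ε ≤ 2 * t * ((starRingEnd ℂ) (u1 t) * u t).re - ‖u t‖ ^ 2 :=
    fun t ht => hcon t (le_trans (le_max_left _ _) ht) (by linarith)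
  have hcont : Continuous fun t => 2 * ((starRingEnd ℂ) (u1 t) * u t).re := by
    have : Continuous fun t => (starRingEnd ℂ) (u1 t) * u t :=
      ((continuous_star.comp hu1c).mul huc)
    exact (continuous_const.mul (Complex.continuous_re.comp this))
  have grow : ∀ T, S ≤ T → ε * Real.log (T / S) ≤ ‖u T‖ ^ 2 - ‖u S‖ ^ 2 := by
    intro T hT
    have hftc : (∫ t in S..T, 2 * ((starRingEnd ℂ) (u1 t) * u t).re)
        = ‖u T‖ ^ 2 - ‖u S‖ ^ 2 :=
      intervalIntegral.integral_eq_sub_of_hasDerivAt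
        (fun t _ => hasDerivAt_normsq u u1 hD1 t) (hcont.intervalIntegrable _ _)
    have hdivint : IntervalIntegrable (fun t => ε / t) volume S T := by
      apply ContinuousOn.intervalIntegrable
      apply ContinuousOn.div continuousOn_const continuousOn_id
      intro x hx
      rw [uIcc_of_le hT] at hx
      exact ne_of_gt (lt_of_lt_of_le hS0 hx.1)
    have hmono : (∫ t in S..T, ε / t) ≤ ∫ t in S..T, 2 * ((starRingEnd ℂ) (u1 t) * u t).re := by
      apply intervalIntegral.integral_mono_on hT hdivint (hcont.intervalIntegrable _ _)
      intro x hx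
      have hx0 : 0 < x := lt_of_lt_of_le hS0 hx.1
      have h1 := hg x hx.1
      rw [div_le_iff₀ hx0]
      nlinarith [sq_nonneg ‖u x‖]
    have hlog : (∫ t in S..T, ε / t) = ε * Real.log (T / S) := by
      have : (fun t : ℝ => ε / t) = fun t : ℝ => ε * (1 / t) := by funext t; ring
      rw [this, intervalIntegral.integral_const_mul, integral_one_div]
      intro h
      rw [uIcc_of_le hT] at h
      exact absurd h.1 (by linarith)
    linarith [hlog ▸ hmono, hftc ▸ hmono]
  set T₁ := S * Real.exp (1 / ε) with hT₁def
  have hT₁S : S ≤ T₁ := le_mul_of_one_le_right hS0.le (Real.one_le_exp (by positivity))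
  have hT₁0 : (0:ℝ) < T₁ := lt_of_lt_of_le hS0 hT₁S
  have hone : ∀ t, T₁ ≤ t → 1 ≤ ‖u t‖ ^ 2 := by
    intro t ht
    have hgrow := grow t (le_trans hT₁S ht)
    have ht0 : 0 < t := lt_of_lt_of_le hT₁0 ht
    have hlog : 1 / ε ≤ Real.log (t / S) := by
      rw [Real.le_log_iff_exp_le (by positivity), le_div_iff₀ hS0]
      calc Real.exp (1/ε) * S = T₁ := by rw [hT₁def]; ring
        _ ≤ t := ht
    have h1 : 1 ≤ ε * Real.log (t / S) := by
      calc (1:ℝ) = ε * (1 / ε) := by field_simp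
        _ ≤ ε * Real.log (t / S) := mul_le_mul_of_nonneg_left hlog hε.le
    nlinarith [sq_nonneg ‖u S‖]
  have hint : IntegrableOn (fun t => ‖u t‖ ^ 2) (Ioi T₁) :=
    hU.mono_set (Ioi_subset_Ioi hT₁0.le)
  have hconst : IntegrableOn (fun _ : ℝ => (1:ℝ)) (Ioi T₁) := by
    apply Integrable.mono' hint aestronglyMeasurable_const
    filter_upwards [ae_restrict_mem measurableSet_Ioi] with t ht
    simpa using hone t (le_of_lt ht)
  rcases integrable_const_iff.mp hconst with h | h
  · exact one_ne_zero h
  · have h := measure_lt_top (volume.restrict (Ioi T₁)) univ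
    rw [Measure.restrict_apply_univ, Real.volume_Ioi] at h
    exact (lt_irrefl _ (lt_of_lt_of_le h le_top)).elim

private lemma u0_bound (u u1 u2 : ℝ → ℂ) (hD1 : ∀ t, HasDerivAt u (u1 t) t)
    (hD2 : ∀ t, HasDerivAt u1 (u2 t) t)
    (huc : Continuous u) (hu1c : Continuous u1) (hu2c : Continuous u2)
    (hU : IntegrableOn (fun t => ‖u t‖ ^ 2) (Ioi (0:ℝ)))
    (hA : IntegrableOn (fun t => ‖u2 t‖ ^ 2) (Ioi (0:ℝ))) :
    ‖u 0‖ ^ 2 ≤ 6 * (∫ t in Ioi (0:ℝ), ‖u t‖ ^ 2)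
      + (3/2) * (∫ t in (0:ℝ)..(1/2:ℝ), t * ‖u1 t‖ ^ 2)
      + (1/8) * (∫ t in Ioi (0:ℝ), ‖u2 t‖ ^ 2) := by
  have hnorm2 : Continuous fun s : ℝ => ‖(s:ℂ) * u2 s‖ :=
    (Complex.continuous_ofReal.mul hu2c).norm
  set I3 := ∫ s in (0:ℝ)..(1/2:ℝ), ‖(s:ℂ) * u2 s‖ with hI3def
  -- pointwise bound
  have ptb : ∀ t ∈ Icc (0:ℝ) (1/2:ℝ), ‖u 0‖ ≤ ‖u t‖ + t * ‖u1 t‖ + I3 := by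
    intro t ht
    have h1 : ‖u 0‖ ≤ ‖u t‖ + ‖(t:ℂ) * u1 t‖ + ‖∫ s in (0:ℝ)..t, (s:ℂ) * u2 s‖ := by
      rw [taylor_u0 u u1 u2 hD1 hD2 hu2c t]
      calc ‖u t - (t:ℂ) * u1 t + ∫ s in (0:ℝ)..t, (s:ℂ) * u2 s‖
          ≤ ‖u t - (t:ℂ) * u1 t‖ + ‖∫ s in (0:ℝ)..t, (s:ℂ) * u2 s‖ := norm_add_le _ _
        _ ≤ ‖u t‖ + ‖(t:ℂ) * u1 t‖ + ‖∫ s in (0:ℝ)..t, (s:ℂ) * u2 s‖ := by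
            linarith [norm_sub_le (u t) ((t:ℂ) * u1 t)]
    have h2 : ‖(t:ℂ) * u1 t‖ = t * ‖u1 t‖ := by
      rw [norm_mul, Complex.norm_real, Real.norm_eq_abs, abs_of_nonneg ht.1]
    have h3 : ‖∫ s in (0:ℝ)..t, (s:ℂ) * u2 s‖ ≤ I3 := by
      calc ‖∫ s in (0:ℝ)..t, (s:ℂ) * u2 s‖ ≤ ∫ s in (0:ℝ)..t, ‖(s:ℂ) * u2 s‖ :=
            intervalIntegral.norm_integral_le_integral_norm ht.1
        _ ≤ I3 := by
            apply intervalIntegral.integral_mono_interval le_rfl ht.1 ht.2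
            · filter_upwards with s using norm_nonneg _
            · exact hnorm2.intervalIntegrable _ _
    linarith [h2 ▸ h1]
  -- averaging
  have havg : ‖u 0‖ ≤ 2 * (∫ t in (0:ℝ)..(1/2:ℝ), ‖u t‖)
      + 2 * (∫ t in (0:ℝ)..(1/2:ℝ), t * ‖u1 t‖) + I3 := by
    have hi1 : IntervalIntegrable (fun t : ℝ => ‖u t‖) volume 0 (1/2:ℝ) :=
      (huc.norm).intervalIntegrable _ _
    have hi2 : IntervalIntegrable (fun t : ℝ => t * ‖u1 t‖) volume 0 (1/2:ℝ) := by
      exact (continuous_id.mul hu1c.norm).intervalIntegrable _ _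
    have hi3 : IntervalIntegrable (fun _ : ℝ => I3) volume 0 (1/2:ℝ) := intervalIntegrable_const
    have hrhsint : IntervalIntegrable (fun t => ‖u t‖ + t * ‖u1 t‖ + I3) volume 0 (1/2:ℝ) :=
      (hi1.add hi2).add hi3
    have h1 : (∫ _ in (0:ℝ)..(1/2:ℝ), ‖u 0‖)
        ≤ ∫ t in (0:ℝ)..(1/2:ℝ), (‖u t‖ + t * ‖u1 t‖ + I3) :=
      intervalIntegral.integral_mono_on (by norm_num) (intervalIntegrable_const) hrhsint ptb
    rw [intervalIntegral.integral_const] at h1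
    rw [intervalIntegral.integral_add (hi1.add hi2) hi3,
      intervalIntegral.integral_add hi1 hi2,
      intervalIntegral.integral_const] at h1
    simp only [smul_eq_mul] at h1
    linarith
  -- Cauchy-Schwarz bounds
  have hT1 : (∫ t in (0:ℝ)..(1/2:ℝ), ‖u t‖)
      ≤ Real.sqrt (1/2) * Real.sqrt (∫ t in (0:ℝ)..(1/2:ℝ), ‖u t‖ ^ 2) := by
    have hcs := cs_interval (f := fun _ : ℝ => (1:ℝ)) (g := fun t => ‖u t‖)
      (a := 0) (b := 1/2) (by norm_num) continuous_const huc.norm (fun _ => zero_le_one) (fun t => norm_nonneg _)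
    have e1 : (∫ t in (0:ℝ)..(1/2:ℝ), (1:ℝ) * ‖u t‖) = ∫ t in (0:ℝ)..(1/2:ℝ), ‖u t‖ := by
      apply intervalIntegral.integral_congr
      intro s _
      exact one_mul _
    have e2 : (∫ _ in (0:ℝ)..(1/2:ℝ), ((1:ℝ))^2) = 1/2 := by
      rw [intervalIntegral.integral_const]
      norm_num
    rw [e1, e2] at hcs
    exact hcs
  have hT2 : (∫ t in (0:ℝ)..(1/2:ℝ), t * ‖u1 t‖)
      ≤ Real.sqrt (1/8) * Real.sqrt (∫ t in (0:ℝ)..(1/2:ℝ), t * ‖u1 t‖ ^ 2) := by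
    have hcs := cs_interval (f := fun t : ℝ => Real.sqrt t)
      (g := fun t : ℝ => Real.sqrt t * ‖u1 t‖) (a := 0) (b := 1/2) (by norm_num) Real.continuous_sqrt
      (Real.continuous_sqrt.mul hu1c.norm) (fun t => Real.sqrt_nonneg t)
      (fun t => mul_nonneg (Real.sqrt_nonneg t) (norm_nonneg _))
    have e1 : (∫ t in (0:ℝ)..(1/2:ℝ), Real.sqrt t * (Real.sqrt t * ‖u1 t‖))
        = ∫ t in (0:ℝ)..(1/2:ℝ), t * ‖u1 t‖ := by
      apply intervalIntegral.integral_congr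
      intro s hs
      rw [uIcc_of_le (by norm_num)] at hs
      show Real.sqrt s * (Real.sqrt s * ‖u1 s‖) = s * ‖u1 s‖
      rw [← mul_assoc, Real.mul_self_sqrt hs.1]
    have e2 : (∫ t in (0:ℝ)..(1/2:ℝ), Real.sqrt t ^ 2) = 1/8 := by
      have : (∫ t in (0:ℝ)..(1/2:ℝ), Real.sqrt t ^ 2) = ∫ t in (0:ℝ)..(1/2:ℝ), t := by
        apply intervalIntegral.integral_congr
        intro s hs
        rw [uIcc_of_le (by norm_num)] at hs
        exact Real.sq_sqrt hs.1
      rw [this, integral_id]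
      norm_num
    have e3 : (∫ t in (0:ℝ)..(1/2:ℝ), (Real.sqrt t * ‖u1 t‖) ^ 2)
        = ∫ t in (0:ℝ)..(1/2:ℝ), t * ‖u1 t‖ ^ 2 := by
      apply intervalIntegral.integral_congr
      intro s hs
      rw [uIcc_of_le (by norm_num)] at hs
      show (Real.sqrt s * ‖u1 s‖) ^ 2 = s * ‖u1 s‖ ^ 2
      rw [mul_pow, Real.sq_sqrt hs.1]
    rw [e1, e2, e3] at hcs
    exact hcs
  have hT3 : I3 ≤ Real.sqrt (1/24) * Real.sqrt (∫ t in (0:ℝ)..(1/2:ℝ), ‖u2 t‖ ^ 2) := by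
    have hcs := cs_interval (f := fun s : ℝ => |s|) (g := fun s : ℝ => ‖u2 s‖)
      (a := 0) (b := 1/2) (by norm_num) (continuous_abs) hu2c.norm (fun t => abs_nonneg t) (fun t => norm_nonneg _)
    have e1 : (∫ s in (0:ℝ)..(1/2:ℝ), |s| * ‖u2 s‖) = I3 := by
      rw [hI3def]
      apply intervalIntegral.integral_congr
      intro s _
      show |s| * ‖u2 s‖ = ‖(s:ℂ) * u2 s‖
      rw [norm_mul, Complex.norm_real, Real.norm_eq_abs]
    have e2 : (∫ s in (0:ℝ)..(1/2:ℝ), |s| ^ 2) = 1/24 := by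
      have : (∫ s in (0:ℝ)..(1/2:ℝ), |s| ^ 2) = ∫ s in (0:ℝ)..(1/2:ℝ), s ^ 2 := by
        apply intervalIntegral.integral_congr
        intro s _
        exact sq_abs s
      rw [this, integral_pow]
      norm_num
    rw [e1, e2] at hcs
    exact hcs
  -- pass to Ioi for U and A pieces
  have hUle : (∫ t in (0:ℝ)..(1/2:ℝ), ‖u t‖ ^ 2) ≤ ∫ t in Ioi (0:ℝ), ‖u t‖ ^ 2 := by
    rw [intervalIntegral.integral_of_le (by norm_num)]
    apply setIntegral_mono_set hU
    · filter_upwards with t using sq_nonneg _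
    · exact (Ioc_subset_Ioi_self).eventuallyLE
  have hAle : (∫ t in (0:ℝ)..(1/2:ℝ), ‖u2 t‖ ^ 2) ≤ ∫ t in Ioi (0:ℝ), ‖u2 t‖ ^ 2 := by
    rw [intervalIntegral.integral_of_le (by norm_num)]
    apply setIntegral_mono_set hA
    · filter_upwards with t using sq_nonneg _
    · exact (Ioc_subset_Ioi_self).eventuallyLE
  -- combine
  set x := Real.sqrt (∫ t in (0:ℝ)..(1/2:ℝ), ‖u t‖ ^ 2) with hx
  set y := Real.sqrt (∫ t in (0:ℝ)..(1/2:ℝ), t * ‖u1 t‖ ^ 2) with hy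
  set z := Real.sqrt (∫ t in (0:ℝ)..(1/2:ℝ), ‖u2 t‖ ^ 2) with hz
  have hx2 : x ^ 2 = ∫ t in (0:ℝ)..(1/2:ℝ), ‖u t‖ ^ 2 := Real.sq_sqrt
    (intervalIntegral.integral_nonneg (by norm_num) fun t _ => sq_nonneg _)
  have hy2 : y ^ 2 = ∫ t in (0:ℝ)..(1/2:ℝ), t * ‖u1 t‖ ^ 2 := Real.sq_sqrt
    (intervalIntegral.integral_nonneg (by norm_num) fun t ht => mul_nonneg ht.1 (sq_nonneg _))
  have hz2 : z ^ 2 = ∫ t in (0:ℝ)..(1/2:ℝ), ‖u2 t‖ ^ 2 := Real.sq_sqrt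
    (intervalIntegral.integral_nonneg (by norm_num) fun t _ => sq_nonneg _)
  have hs2 : Real.sqrt (1/2) ^ 2 = 1/2 := Real.sq_sqrt (by norm_num)
  have hs8 : Real.sqrt (1/8) ^ 2 = 1/8 := Real.sq_sqrt (by norm_num)
  have hs24 : Real.sqrt (1/24) ^ 2 = 1/24 := Real.sq_sqrt (by norm_num)
  have hxn : 0 ≤ x := Real.sqrt_nonneg _
  have hyn : 0 ≤ y := Real.sqrt_nonneg _
  have hzn : 0 ≤ z := Real.sqrt_nonneg _
  have hs2n : 0 ≤ Real.sqrt (1/2) := Real.sqrt_nonneg _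
  have hs8n : 0 ≤ Real.sqrt (1/8) := Real.sqrt_nonneg _
  have hs24n : 0 ≤ Real.sqrt (1/24) := Real.sqrt_nonneg _
  have hub : ‖u 0‖ ≤ 2 * (Real.sqrt (1/2) * x) + 2 * (Real.sqrt (1/8) * y)
      + Real.sqrt (1/24) * z := by linarith
  have hq : ‖u 0‖ ^ 2 ≤ 6 * x ^ 2 + (3/2) * y ^ 2 + (1/8) * z ^ 2 := by
    have hn0 : 0 ≤ ‖u 0‖ := norm_nonneg _
    nlinarith [sq_nonneg (2 * (Real.sqrt (1/2) * x) - 2 * (Real.sqrt (1/8) * y)),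
      sq_nonneg (2 * (Real.sqrt (1/2) * x) - Real.sqrt (1/24) * z),
      sq_nonneg (2 * (Real.sqrt (1/8) * y) - Real.sqrt (1/24) * z),
      mul_nonneg (mul_nonneg hs2n hxn) (mul_nonneg hs8n hyn),
      mul_nonneg (mul_nonneg hs2n hxn) (mul_nonneg hs24n hzn),
      mul_nonneg (mul_nonneg hs8n hyn) (mul_nonneg hs24n hzn)]
  calc ‖u 0‖ ^ 2 ≤ 6 * x ^ 2 + (3/2) * y ^ 2 + (1/8) * z ^ 2 := hq
    _ ≤ _ := by rw [hx2, hy2, hz2]; linarith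

/-- There is `C > 0` such that for every `u` in the maximal domain
`B = {u ∈ L² : u'', tu ∈ L²}` of the Airy operator on `(0,∞)`,
`‖u‖_B = ‖D_t²u‖ + ‖tu‖ + ‖u‖ ≤ C(‖u‖ + ‖(D_t²+t)u‖)`. -/
theorem B_norm_estimate :
    ∃ C > (0:ℝ), ∀ u : ℝ → ℂ, ContDiff ℝ 2 u →
      MemLp u 2 (volume.restrict (Ioi (0:ℝ))) →
      MemLp (deriv (deriv u)) 2 (volume.restrict (Ioi (0:ℝ))) →
      MemLp (fun t : ℝ => (t:ℂ) * u t) 2 (volume.restrict (Ioi (0:ℝ))) →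
      L2norm (deriv (deriv u)) + L2norm (fun t : ℝ => (t:ℂ) * u t) + L2norm u
        ≤ C * (L2norm u + L2norm (fun t : ℝ => -(deriv (deriv u) t) + (t:ℂ) * u t)) := by
  refine ⟨10, by norm_num, ?_⟩
  intro u hu h1 h2 h3
  -- smoothness facts
  have hu' : ContDiff ℝ (1 + 1 : WithTop ℕ∞) u := by
    rw [show (1 + 1 : WithTop ℕ∞) = 2 by norm_num]; exact hu
  have hud : Differentiable ℝ u := hu.differentiable (by norm_num)
  have hu1c' : ContDiff ℝ 1 (deriv u) := (contDiff_succ_iff_deriv.mp hu').2.2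
  have hu1d : Differentiable ℝ (deriv u) := hu1c'.differentiable (by norm_num)
  have hu2c : Continuous (deriv (deriv u)) := (contDiff_one_iff_deriv.mp hu1c').2
  have huc : Continuous u := hud.continuous
  have hu1c : Continuous (deriv u) := hu1d.continuous
  have hD1 : ∀ t, HasDerivAt u (deriv u t) t := fun t => (hud t).hasDerivAt
  have hD2 : ∀ t, HasDerivAt (deriv u) (deriv (deriv u) t) t := fun t => (hu1d t).hasDerivAt
  -- integrability of squares
  have sqInt : ∀ (f : ℝ → ℂ), MemLp f 2 (volume.restrict (Ioi (0:ℝ))) →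
      IntegrableOn (fun t => ‖f t‖ ^ 2) (Ioi (0:ℝ)) := by
    intro f hf
    have := hf.integrable_norm_rpow two_ne_zero ENNReal.ofNat_ne_top
    have h2' : (2 : ℝ≥0∞).toReal = (2:ℝ) := by simp
    rw [h2'] at this
    have heq : (fun x => ‖f x‖ ^ (2:ℝ)) = fun x => ‖f x‖ ^ (2:ℕ) := by
      funext x
      rw [← Real.rpow_natCast ‖f x‖ 2]
      norm_num
    rwa [heq] at this
  have hUint : IntegrableOn (fun t => ‖u t‖ ^ 2) (Ioi (0:ℝ)) := sqInt _ h1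
  have hAint : IntegrableOn (fun t => ‖deriv (deriv u) t‖ ^ 2) (Ioi (0:ℝ)) := sqInt _ h2
  have hBint : IntegrableOn (fun t : ℝ => ‖(t:ℂ) * u t‖ ^ 2) (Ioi (0:ℝ)) := sqInt _ h3
  have hFmem : MemLp (fun t : ℝ => -(deriv (deriv u) t) + (t:ℂ) * u t) 2
      (volume.restrict (Ioi (0:ℝ))) := h2.neg.add h3
  have hFint : IntegrableOn (fun t : ℝ => ‖-(deriv (deriv u) t) + (t:ℂ) * u t‖ ^ 2) (Ioi (0:ℝ)) :=
    sqInt _ hFmem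
  set A := ∫ t in Ioi (0:ℝ), ‖deriv (deriv u) t‖ ^ 2 with hAdef
  set B := ∫ t in Ioi (0:ℝ), ‖(t:ℂ) * u t‖ ^ 2 with hBdef
  set U := ∫ t in Ioi (0:ℝ), ‖u t‖ ^ 2 with hUdef
  set F := ∫ t in Ioi (0:ℝ), ‖-(deriv (deriv u) t) + (t:ℂ) * u t‖ ^ 2 with hFdef
  have hA0 : 0 ≤ A := setIntegral_nonneg measurableSet_Ioi fun t _ => sq_nonneg _
  have hB0 : 0 ≤ B := setIntegral_nonneg measurableSet_Ioi fun t _ => sq_nonneg _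
  have hU0 : 0 ≤ U := setIntegral_nonneg measurableSet_Ioi fun t _ => sq_nonneg _
  have hF0 : 0 ≤ F := setIntegral_nonneg measurableSet_Ioi fun t _ => sq_nonneg _
  -- FTC identity on [0, R]
  have gcont : Continuous fun t => 2 * t * ((starRingEnd ℂ) (deriv (deriv u) t) * u t).re
      + 2 * (t * ‖deriv u t‖ ^ 2) := by
    have hc1 : Continuous fun t : ℝ => (starRingEnd ℂ) (deriv (deriv u) t) * u t :=
      (continuous_star.comp hu2c).mul huc
    exact ((continuous_const.mul continuous_id).mul (Complex.continuous_re.comp hc1)).add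
      (continuous_const.mul (continuous_id.mul (hu1c.norm.pow 2)))
  have ident : ∀ R : ℝ, 0 ≤ R →
      (∫ t in (0:ℝ)..R, ‖-(deriv (deriv u) t) + (t:ℂ) * u t‖ ^ 2)
        = (∫ t in (0:ℝ)..R, ‖deriv (deriv u) t‖ ^ 2)
          + (∫ t in (0:ℝ)..R, ‖(t:ℂ) * u t‖ ^ 2)
          + 2 * (∫ t in (0:ℝ)..R, t * ‖deriv u t‖ ^ 2)
          - (2 * R * ((starRingEnd ℂ) (deriv u R) * u R).re - ‖u R‖ ^ 2)
          - ‖u 0‖ ^ 2 := by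
    intro R hR
    have hftc : (∫ t in (0:ℝ)..R, (2 * t * ((starRingEnd ℂ) (deriv (deriv u) t) * u t).re
          + 2 * (t * ‖deriv u t‖ ^ 2)))
        = (2 * R * ((starRingEnd ℂ) (deriv u R) * u R).re - ‖u R‖ ^ 2)
          - (2 * 0 * ((starRingEnd ℂ) (deriv u 0) * u 0).re - ‖u 0‖ ^ 2) :=
      intervalIntegral.integral_eq_sub_of_hasDerivAt
        (fun t _ => hasDerivAt_g u (deriv u) (deriv (deriv u)) hD1 hD2 t)
        (gcont.intervalIntegrable _ _)
    have hpt : ∀ t : ℝ, ‖-(deriv (deriv u) t) + (t:ℂ) * u t‖ ^ 2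
        = ‖deriv (deriv u) t‖ ^ 2 + ‖(t:ℂ) * u t‖ ^ 2 + 2 * (t * ‖deriv u t‖ ^ 2)
          - (2 * t * ((starRingEnd ℂ) (deriv (deriv u) t) * u t).re
            + 2 * (t * ‖deriv u t‖ ^ 2)) := by
      intro t
      simp only [Complex.sq_norm, Complex.normSq_apply, Complex.add_re,
        Complex.add_im, Complex.neg_re, Complex.neg_im, Complex.mul_re, Complex.mul_im,
        Complex.ofReal_re, Complex.ofReal_im, Complex.conj_re, Complex.conj_im]
      ring
    have hi1 : IntervalIntegrable (fun t => ‖deriv (deriv u) t‖ ^ 2) volume 0 R :=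
      ((hu2c.norm.pow 2).intervalIntegrable _ _)
    have hi2 : IntervalIntegrable (fun t : ℝ => ‖(t:ℂ) * u t‖ ^ 2) volume 0 R :=
      (((Complex.continuous_ofReal.mul huc).norm.pow 2).intervalIntegrable _ _)
    have hi3 : IntervalIntegrable (fun t : ℝ => 2 * (t * ‖deriv u t‖ ^ 2)) volume 0 R :=
      ((continuous_const.mul (continuous_id.mul (hu1c.norm.pow 2))).intervalIntegrable _ _)
    have hi4 : IntervalIntegrable (fun t => 2 * t * ((starRingEnd ℂ) (deriv (deriv u) t) * u t).re
        + 2 * (t * ‖deriv u t‖ ^ 2)) volume 0 R := gcont.intervalIntegrable _ _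
    calc (∫ t in (0:ℝ)..R, ‖-(deriv (deriv u) t) + (t:ℂ) * u t‖ ^ 2)
        = ∫ t in (0:ℝ)..R, (‖deriv (deriv u) t‖ ^ 2 + ‖(t:ℂ) * u t‖ ^ 2
            + 2 * (t * ‖deriv u t‖ ^ 2)
            - (2 * t * ((starRingEnd ℂ) (deriv (deriv u) t) * u t).re
              + 2 * (t * ‖deriv u t‖ ^ 2))) := by
          apply intervalIntegral.integral_congr
          intro t _
          exact hpt t
      _ = (∫ t in (0:ℝ)..R, ‖deriv (deriv u) t‖ ^ 2)
          + (∫ t in (0:ℝ)..R, ‖(t:ℂ) * u t‖ ^ 2)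
          + (∫ t in (0:ℝ)..R, 2 * (t * ‖deriv u t‖ ^ 2))
          - ∫ t in (0:ℝ)..R, (2 * t * ((starRingEnd ℂ) (deriv (deriv u) t) * u t).re
              + 2 * (t * ‖deriv u t‖ ^ 2)) := by
          rw [intervalIntegral.integral_sub ((hi1.add hi2).add hi3) hi4,
            intervalIntegral.integral_add (hi1.add hi2) hi3,
            intervalIntegral.integral_add hi1 hi2]
      _ = _ := by
          rw [hftc, intervalIntegral.integral_const_mul]
          simp only [mul_zero, zero_mul, zero_sub, sub_neg_eq_add]
          ring
  -- main inequality
  have hmain : A + B ≤ F + 6 * U + (1/8) * A := by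
    refine le_of_forall_pos_le_add ?_
    intro ε hε
    by_contra hlt
    push_neg at hlt
    have hTend : Filter.Tendsto (fun R => (∫ t in (0:ℝ)..R, ‖deriv (deriv u) t‖ ^ 2)
        + ∫ t in (0:ℝ)..R, ‖(t:ℂ) * u t‖ ^ 2) Filter.atTop (nhds (A + B)) :=
      (intervalIntegral_tendsto_integral_Ioi 0 hAint Filter.tendsto_id).add
        (intervalIntegral_tendsto_integral_Ioi 0 hBint Filter.tendsto_id)
    have hev : ∀ᶠ R in Filter.atTop, F + 6 * U + (1/8) * A + ε
        < (∫ t in (0:ℝ)..R, ‖deriv (deriv u) t‖ ^ 2)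
          + ∫ t in (0:ℝ)..R, ‖(t:ℂ) * u t‖ ^ 2 :=
      hTend.eventually (eventually_gt_nhds hlt)
    obtain ⟨R₀, hR₀⟩ := Filter.eventually_atTop.mp hev
    obtain ⟨R, hRR₀, hR12, hgR⟩ := freq_small u (deriv u) hD1 huc hu1c hUint hε R₀
    have hu0 := u0_bound u (deriv u) (deriv (deriv u)) hD1 hD2 huc hu1c hu2c hUint hAint
    have hid := ident R (by linarith)
    have hQR0 : (0:ℝ) ≤ ∫ t in (0:ℝ)..R, t * ‖deriv u t‖ ^ 2 :=
      intervalIntegral.integral_nonneg (by linarith) fun t ht => mul_nonneg ht.1 (sq_nonneg _)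
    have hQmono : (∫ t in (0:ℝ)..(1/2:ℝ), t * ‖deriv u t‖ ^ 2)
        ≤ ∫ t in (0:ℝ)..R, t * ‖deriv u t‖ ^ 2 := by
      apply intervalIntegral.integral_mono_interval le_rfl (by norm_num) hR12
      · filter_upwards [ae_restrict_mem measurableSet_Ioc] with t ht
        exact mul_nonneg (le_of_lt ht.1) (sq_nonneg _)
      · exact (continuous_id.mul (hu1c.norm.pow 2)).intervalIntegrable _ _
    have hFR : (∫ t in (0:ℝ)..R, ‖-(deriv (deriv u) t) + (t:ℂ) * u t‖ ^ 2) ≤ F := by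
      rw [intervalIntegral.integral_of_le (by linarith : (0:ℝ) ≤ R)]
      apply setIntegral_mono_set hFint
      · filter_upwards with t using sq_nonneg _
      · exact Ioc_subset_Ioi_self.eventuallyLE
    have := hR₀ R hRR₀
    linarith
  -- conclude with square roots
  have hBle : B ≤ F + 6 * U := by linarith
  have hAle : A ≤ 2 * (F + 6 * U) := by linarith
  have hL2u2 : L2norm (deriv (deriv u)) = Real.sqrt A := rfl
  have hL2tu : L2norm (fun t : ℝ => (t:ℂ) * u t) = Real.sqrt B := rfl
  have hL2u : L2norm u = Real.sqrt U := rfl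
  have hL2F : L2norm (fun t : ℝ => -(deriv (deriv u) t) + (t:ℂ) * u t) = Real.sqrt F := rfl
  rw [hL2u2, hL2tu, hL2u, hL2F]
  have hsqrt_add : ∀ x y : ℝ, 0 ≤ x → 0 ≤ y → Real.sqrt (x + y) ≤ Real.sqrt x + Real.sqrt y := by
    intro x y hx hy
    have h : x + y ≤ (Real.sqrt x + Real.sqrt y) ^ 2 := by
      have hx' := Real.sq_sqrt hx
      have hy' := Real.sq_sqrt hy
      nlinarith [Real.sqrt_nonneg x, Real.sqrt_nonneg y]
    calc Real.sqrt (x + y) ≤ Real.sqrt ((Real.sqrt x + Real.sqrt y) ^ 2) := Real.sqrt_le_sqrt h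
      _ = _ := Real.sqrt_sq (by positivity)
  have h6U : Real.sqrt (6 * U) = Real.sqrt 6 * Real.sqrt U := Real.sqrt_mul (by norm_num) _
  have hFU : Real.sqrt (F + 6 * U) ≤ Real.sqrt F + Real.sqrt 6 * Real.sqrt U := by
    rw [← h6U]
    exact hsqrt_add _ _ hF0 (by linarith)
  have hsB : Real.sqrt B ≤ Real.sqrt F + Real.sqrt 6 * Real.sqrt U :=
    le_trans (Real.sqrt_le_sqrt hBle) hFU
  have hsA : Real.sqrt A ≤ Real.sqrt 2 * (Real.sqrt F + Real.sqrt 6 * Real.sqrt U) := by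
    calc Real.sqrt A ≤ Real.sqrt (2 * (F + 6 * U)) := Real.sqrt_le_sqrt hAle
      _ = Real.sqrt 2 * Real.sqrt (F + 6 * U) := Real.sqrt_mul (by norm_num) _
      _ ≤ Real.sqrt 2 * (Real.sqrt F + Real.sqrt 6 * Real.sqrt U) :=
          mul_le_mul_of_nonneg_left hFU (Real.sqrt_nonneg 2)
  have hs2 : Real.sqrt 2 ≤ 3/2 := by
    have := Real.sqrt_le_sqrt (show (2:ℝ) ≤ (3/2)^2 by norm_num)
    rwa [Real.sqrt_sq (by norm_num)] at this
  have hs6 : Real.sqrt 6 ≤ 5/2 := by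
    have := Real.sqrt_le_sqrt (show (6:ℝ) ≤ (5/2)^2 by norm_num)
    rwa [Real.sqrt_sq (by norm_num)] at this
  have hsFn : 0 ≤ Real.sqrt F := Real.sqrt_nonneg _
  have hsUn : 0 ≤ Real.sqrt U := Real.sqrt_nonneg _
  have hs2n : 0 ≤ Real.sqrt 2 := Real.sqrt_nonneg _
  have hs6n : 0 ≤ Real.sqrt 6 := Real.sqrt_nonneg _
  nlinarith [mul_le_mul hs2 hs6 hs6n (by norm_num : (0:ℝ) ≤ 3/2),
    mul_le_mul_of_nonneg_right hs2 hsFn, mul_le_mul_of_nonneg_right hs6 hsUn,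
    mul_le_mul_of_nonneg_right (mul_le_mul hs2 hs6 hs6n (by norm_num : (0:ℝ) ≤ 3/2)) hsUn]
end

section
/- For λ > 0, let f_λ(t) = Ai'(e^{2πi/3}λ)^{−1} Ai(t + e^{2πi/3}λ) for t ∈ [0,∞). Then f_λ solves e^{−2πi/3}(D_t² + t)f_λ + λ f_λ = 0 on (0,∞) with f_λ'(0) = 1, and ‖f_λ‖_{L²(0,∞)} = O(λ^{−3/4}) as λ → ∞. -/
open Filter Asymptotics Real MeasureTheory Set

set_option maxHeartbeats 1600000

/-- The Neumann Poisson kernel for the complex-scaled Airy model: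
`f_λ(t) = Ai'(e^{2πi/3}λ)⁻¹ · Ai(t + e^{2πi/3}λ)`. -/
noncomputable def poissonAiry (Ai : ℂ → ℂ) (lam t : ℝ) : ℂ :=
  (deriv Ai (Complex.exp ((2 * π / 3 : ℝ) * Complex.I) * lam))⁻¹ *
    Ai ((t : ℂ) + Complex.exp ((2 * π / 3 : ℝ) * Complex.I) * lam)

/-- If `φ` has nonneg derivative on `(A,B)`, then `φ A ≤ φ B`. -/
lemma airy_monoHelper {φ φ' : ℝ → ℝ} {A B : ℝ} (hAB : A ≤ B)
    (hd : ∀ t ∈ Icc A B, HasDerivAt φ (φ' t) t)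
    (h0 : ∀ t ∈ Ioo A B, 0 ≤ φ' t) : φ A ≤ φ B := by
  have hmono : MonotoneOn φ (Icc A B) := by
    apply monotoneOn_of_deriv_nonneg (convex_Icc A B)
    · exact fun t ht => (hd t ht).continuousAt.continuousWithinAt
    · intro t ht
      rw [interior_Icc] at ht
      exact ((hd t (Ioo_subset_Icc_self ht)).differentiableAt).differentiableWithinAt
    · intro t ht
      rw [interior_Icc] at ht
      rw [(hd t (Ioo_subset_Icc_self ht)).deriv]
      exact h0 t ht
  exact hmono (left_mem_Icc.2 hAB) (right_mem_Icc.2 hAB) hAB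

lemma airy_strictHelper {φ φ' : ℝ → ℝ} {A B : ℝ} (hAB : A < B)
    (hd : ∀ t ∈ Icc A B, HasDerivAt φ (φ' t) t)
    (h0 : ∀ t ∈ Ioo A B, 0 < φ' t) : φ A < φ B := by
  have hmono : StrictMonoOn φ (Icc A B) := by
    apply strictMonoOn_of_deriv_pos (convex_Icc A B)
    · exact fun t ht => (hd t ht).continuousAt.continuousWithinAt
    · intro t ht
      rw [interior_Icc] at ht
      rw [(hd t (Ioo_subset_Icc_self ht)).deriv]
      exact h0 t ht
  exact hmono (left_mem_Icc.2 hAB.le) (right_mem_Icc.2 hAB.le) hAB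

/-- Linear growth from a derivative lower bound. -/
lemma airy_linGrow {φ φ' : ℝ → ℝ} {T c : ℝ}
    (hd : ∀ t, T ≤ t → HasDerivAt φ (φ' t) t)
    (hc : ∀ t, T < t → c ≤ φ' t) :
    ∀ t, T ≤ t → φ T + c * (t - T) ≤ φ t := by
  intro t ht
  have := airy_monoHelper (φ := fun s => φ s - c * s) (φ' := fun s => φ' s - c) ht
    (fun s hs => by
      exact ((hd s hs.1).sub ((hasDerivAt_id s).const_mul c)).congr_deriv (by ring))
    (fun s hs => by show 0 ≤ φ' s - c; have := hc s hs.1; linarith)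
  linarith

/-- From continuity: positivity at a point gives positivity on a closed interval. -/
lemma airy_locPos {f : ℝ → ℝ} (hf : Continuous f) (h : 0 < f 0) :
    ∃ δ > 0, ∀ x ∈ Icc (0:ℝ) δ, 0 < f x := by
  have : ∀ᶠ x in nhds (0:ℝ), 0 < f x := (hf.tendsto 0).eventually (eventually_gt_nhds h)
  obtain ⟨ε, hε, hball⟩ := Metric.eventually_nhds_iff.1 this
  refine ⟨ε/2, by linarith, fun x hx => hball ?_⟩
  rw [Real.dist_eq, abs_sub_comm, abs_sub_lt_iff]
  constructor <;> linarith [hx.1, hx.2]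

section realODE
variable {y y' : ℝ → ℝ}
  (hy : ∀ s, HasDerivAt y (y' s) s) (hy' : ∀ s, HasDerivAt y' (s * y s) s)

include hy hy'

lemma airy_noBad {σ : ℝ} (hσ : 0 ≤ σ) (h1 : 0 < y σ) (h2 : 0 < y' σ) :
    ∀ s, σ ≤ s → 0 < y s ∧ 0 < y' s := by
  have hycont : Continuous y := continuous_iff_continuousAt.2 fun s => (hy s).continuousAt
  have hy'cont : Continuous y' := continuous_iff_continuousAt.2 fun s => (hy' s).continuousAt
  by_contra hcon
  push_neg at hcon
  set B : Set ℝ := {s | σ ≤ s ∧ (y s ≤ 0 ∨ y' s ≤ 0)} with hB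
  have hBne : B.Nonempty := by
    obtain ⟨s, hs1, hs2⟩ := hcon
    rcases not_and_or.1 (fun hcc : 0 < y s ∧ 0 < y' s => by
      have := hs2 hcc.1; exact this.not_gt hcc.2) with h | h
    · exact ⟨s, hs1, Or.inl (not_lt.1 h)⟩
    · exact ⟨s, hs1, Or.inr (not_lt.1 h)⟩
  have hBclosed : IsClosed B := by
    have : B = Ici σ ∩ ({s | y s ≤ 0} ∪ {s | y' s ≤ 0}) := by
      ext s; simp only [hB, Set.mem_setOf_eq, Set.mem_inter_iff, Set.mem_Ici,
        Set.mem_union]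
    rw [this]
    exact isClosed_Ici.inter ((isClosed_le hycont continuous_const).union
      (isClosed_le hy'cont continuous_const))
  have hBbdd : BddBelow B := ⟨σ, fun s hs => hs.1⟩
  have ht₀B : sInf B ∈ B := hBclosed.csInf_mem hBne hBbdd
  set t₀ := sInf B with ht₀def
  have ht₀σ : σ ≤ t₀ := le_csInf hBne fun s hs => hs.1
  have hσB : σ ∉ B := by
    intro hσB
    rcases hσB.2 with h | h
    · exact h.not_gt h1
    · exact h.not_gt h2
  have ht₀ne : σ < t₀ := ht₀σ.lt_of_ne (fun heq => hσB (heq ▸ ht₀B))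
  have hgood : ∀ x, σ ≤ x → x < t₀ → 0 < y x ∧ 0 < y' x := by
    intro x hx1 hx2
    by_contra hbad
    have hxB : x ∈ B := by
      rcases not_and_or.1 hbad with h | h
      · exact ⟨hx1, Or.inl (not_lt.1 h)⟩
      · exact ⟨hx1, Or.inr (not_lt.1 h)⟩
    exact (csInf_le hBbdd hxB).not_gt hx2
  have hyt₀ : y σ ≤ y t₀ := by
    apply airy_monoHelper ht₀σ (fun t _ => hy t)
    intro t ht; exact (hgood t ht.1.le ht.2).2.le
  have hy't₀ : y' σ ≤ y' t₀ := by
    apply airy_monoHelper ht₀σ (fun t _ => hy' t)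
    intro t ht
    have hyt := (hgood t ht.1.le ht.2).1
    have ht0 : (0:ℝ) ≤ t := le_trans hσ ht.1.le
    exact mul_nonneg ht0 hyt.le
  rcases ht₀B.2 with h | h
  · linarith
  · linarith

lemma airy_stepMono {σ : ℝ} (hσ : 0 ≤ σ) (h1 : 0 < y σ) (h2 : 0 < y' σ) :
    ∀ s, σ ≤ s → y σ ≤ y s ∧ y' σ ≤ y' s := by
  intro s hs
  constructor
  · apply airy_monoHelper hs (fun t _ => hy t)
    intro t ht
    exact (airy_noBad hy hy' hσ h1 h2 t ht.1.le).2.le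
  · apply airy_monoHelper hs (fun t _ => hy' t)
    intro t ht
    have h := airy_noBad hy hy' hσ h1 h2 t ht.1.le
    have ht0 : (0:ℝ) ≤ t := le_trans hσ ht.1.le
    exact mul_nonneg ht0 h.1.le

lemma airy_posDeriv_all (h0 : 0 ≤ y 0) (h1 : 0 < y' 0) :
    ∀ s, 0 ≤ s → 0 < y' s ∧ (0 < s → 0 < y s) := by
  have hy'cont : Continuous y' := continuous_iff_continuousAt.2 fun s => (hy' s).continuousAt
  obtain ⟨δ, hδ, hδpos⟩ := airy_locPos hy'cont h1
  have hyδ : ∀ s ∈ Ioc (0:ℝ) δ, 0 < y s := by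
    intro s hs
    have : y 0 < y s := by
      apply airy_strictHelper hs.1 (fun t _ => hy t)
      intro t ht; exact hδpos t ⟨ht.1.le, le_trans ht.2.le hs.2⟩
    linarith
  have hstep := airy_stepMono hy hy' hδ.le (hyδ δ ⟨hδ, le_refl δ⟩) (hδpos δ ⟨hδ.le, le_refl δ⟩)
  intro s hs
  rcases le_or_gt s δ with h | h
  · exact ⟨hδpos s ⟨hs, h⟩, fun hspos => hyδ s ⟨hspos, h⟩⟩
  · obtain ⟨hys, hy's⟩ := hstep s h.le
    exact ⟨lt_of_lt_of_le (hδpos δ ⟨hδ.le, le_refl δ⟩) hy's,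
      fun _ => lt_of_lt_of_le (hyδ δ ⟨hδ, le_refl δ⟩) hys⟩

lemma airy_decayFalse (h0 : 0 ≤ y 0) (h1 : 0 ≤ y' 0)
    (hor : 0 < y 0 ∨ 0 < y' 0) (hdec : Tendsto y atTop (nhds 0)) : False := by
  have hycont : Continuous y := continuous_iff_continuousAt.2 fun s => (hy s).continuousAt
  obtain ⟨σ, hσ0, hσ1, hσ2⟩ : ∃ σ, 0 ≤ σ ∧ 0 < y σ ∧ 0 < y' σ := by
    rcases lt_or_ge 0 (y' 0) with h | h
    · obtain ⟨h1', h2'⟩ := airy_posDeriv_all hy hy' h0 h 1 zero_le_one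
      exact ⟨1, zero_le_one, h2' one_pos, h1'⟩
    · have hy'0 : y' 0 = 0 := le_antisymm h h1
      have hy0 : 0 < y 0 := by
        rcases hor with h' | h'
        · exact h'
        · linarith
      obtain ⟨δ, hδ, hδpos⟩ := airy_locPos hycont hy0
      have hy'δ : 0 < y' δ := by
        have : y' 0 < y' δ := by
          apply airy_strictHelper hδ (fun t _ => hy' t)
          intro t ht
          exact mul_pos ht.1 (hδpos t ⟨ht.1.le, ht.2.le⟩)
        linarith
      exact ⟨δ, hδ.le, hδpos δ ⟨hδ.le, le_refl _⟩, hy'δ⟩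
  have hstep := airy_stepMono hy hy' hσ0 hσ1 hσ2
  have hlim : y σ ≤ 0 := by
    apply ge_of_tendsto hdec
    filter_upwards [eventually_ge_atTop σ] with s hs
    exact (hstep s hs).1
  linarith

end realODE

/-- Riccati comparison: a positive increasing solution of `y'' = s y` satisfies
`√s · y ≤ 2 y'` for `s ≥ 2`. -/
lemma airy_riccati {y y' : ℝ → ℝ}
    (hy : ∀ s, HasDerivAt y (y' s) s) (hy' : ∀ s, HasDerivAt y' (s * y s) s)
    (h1 : 0 < y 1) (h2 : 0 < y' 1) :
    ∀ s, 2 ≤ s → Real.sqrt s * y s ≤ 2 * y' s := by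
  have hpos : ∀ s, 1 ≤ s → 0 < y s ∧ 0 < y' s :=
    airy_noBad hy hy' zero_le_one h1 h2
  set r : ℝ → ℝ := fun s => y' s / y s with hrdef
  have hr : ∀ s, 1 ≤ s → HasDerivAt r (s - (r s)^2) s := by
    intro s hs
    have hys : y s ≠ 0 := ne_of_gt (hpos s hs).1
    have := (hy' s).div (hy s) hys
    refine this.congr_deriv ?_
    show _ = s - (y' s / y s)^2
    field_simp
  have hrpos : ∀ s, 1 ≤ s → 0 < r s := fun s hs =>
    div_pos (hpos s hs).2 (hpos s hs).1
  have hrcont : ∀ s, 1 ≤ s → ContinuousAt r s := fun s hs => (hr s hs).continuousAt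
  -- squared bound while below the barrier
  have hsq : ∀ t, 1 ≤ t → r t < Real.sqrt t / 2 → (r t)^2 < t / 4 := by
    intro t ht hlt
    have h0 : 0 ≤ r t := (hrpos t ht).le
    have := pow_lt_pow_left₀ hlt h0 (by norm_num : (2:ℕ) ≠ 0)
    calc (r t)^2 < (Real.sqrt t / 2)^2 := this
      _ = t / 4 := by
        rw [div_pow, Real.sq_sqrt (by linarith : (0:ℝ) ≤ t)]; norm_num
  -- Stage 1 : the barrier is reached somewhere in [1,2]
  obtain ⟨s₀, hs₀mem, hs₀⟩ : ∃ s₀ ∈ Icc (1:ℝ) 2, Real.sqrt s₀ / 2 ≤ r s₀ := by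
    by_contra hall
    push_neg at hall
    have hkey : r 1 + 3/4 * (2 - 1) ≤ r 2 := by
      have := airy_monoHelper (φ := fun s => r s - 3/4 * s)
        (φ' := fun s => (s - (r s)^2) - 3/4) (by norm_num : (1:ℝ) ≤ 2)
        (fun t ht => by
          exact ((hr t ht.1).sub ((hasDerivAt_id t).const_mul (3/4 : ℝ))).congr_deriv (by ring))
        (fun t ht => by
          show 0 ≤ (t - (r t)^2) - 3/4
          have h1t : (1:ℝ) ≤ t := ht.1.le
          have := hsq t h1t (hall t ⟨h1t, ht.2.le⟩)
          linarith)
      linarith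
    have hr1 : 0 < r 1 := hrpos 1 le_rfl
    have hr2 : r 2 < Real.sqrt 2 / 2 := hall 2 ⟨by norm_num, le_rfl⟩
    have : Real.sqrt 2 < 3/2 := by
      rw [Real.sqrt_lt' (by norm_num)]; norm_num
    linarith
  -- Stage 2 : the barrier is an invariant region
  have hstage2 : ∀ s, s₀ ≤ s → Real.sqrt s / 2 ≤ r s := by
    intro T hT
    by_contra hTbad
    push_neg at hTbad
    set D : ℝ → ℝ := fun s => r s - Real.sqrt s / 2 with hD
    have hDT : D T < 0 := by simp [hD]; linarith
    have hDs₀ : 0 ≤ D s₀ := by simp [hD]; linarith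
    have hTne : s₀ < T := hT.lt_of_ne (by rintro rfl; linarith)
    set A : Set ℝ := {s ∈ Icc s₀ T | 0 ≤ D s} with hA
    have hDcont : ContinuousOn D (Icc s₀ T) := by
      apply ContinuousOn.sub
      · exact fun s hs => (hrcont s (le_trans hs₀mem.1 hs.1)).continuousWithinAt
      · exact (Real.continuous_sqrt.div_const 2).continuousOn
    have hAclosed : IsClosed A :=
      hDcont.preimage_isClosed_of_isClosed isClosed_Icc isClosed_Ici
    have hAne : A.Nonempty := ⟨s₀, ⟨le_rfl, hTne.le⟩, hDs₀⟩
    have hAbdd : BddAbove A := ⟨T, fun s hs => hs.1.2⟩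
    have ht₀A : sSup A ∈ A := hAclosed.csSup_mem hAne hAbdd
    set t₀ := sSup A with ht₀def
    have ht₀T : t₀ ≤ T := ht₀A.1.2
    have ht₀s₀ : s₀ ≤ t₀ := ht₀A.1.1
    have ht₀lt : t₀ < T := ht₀T.lt_of_ne (by
      intro heq; rw [heq] at ht₀A; linarith [ht₀A.2])
    have hbad : ∀ x, t₀ < x → x ≤ T → D x < 0 := by
      intro x hx1 hx2
      by_contra hc
      push_neg at hc
      have hxA : x ∈ A := ⟨⟨le_trans ht₀s₀ hx1.le, hx2⟩, hc⟩
      exact (le_csSup hAbdd hxA).not_gt hx1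
    -- D increases on [t₀, T]
    have hmono : D t₀ ≤ D T := by
      apply airy_monoHelper (φ := D)
        (φ' := fun s => (s - (r s)^2) - 1/(4 * Real.sqrt s)) ht₀T
      · intro t ht
        have h1t : (1:ℝ) ≤ t := le_trans hs₀mem.1 (le_trans ht₀s₀ ht.1)
        have htpos : (0:ℝ) < t := by linarith
        have hsd := (Real.hasDerivAt_sqrt (ne_of_gt htpos)).div_const 2
        have := (hr t h1t).sub hsd
        refine this.congr_deriv ?_
        rw [div_div]
        ring_nf
      · intro t ht
        show 0 ≤ (t - (r t)^2) - 1/(4 * Real.sqrt t)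
        have h1t : (1:ℝ) ≤ t := le_trans hs₀mem.1 (le_trans ht₀s₀ ht.1.le)
        have hDt : D t < 0 := hbad t ht.1 ht.2.le
        have hrt : r t < Real.sqrt t / 2 := by
          have h' : r t - Real.sqrt t / 2 < 0 := hDt
          linarith
        have hsqt := hsq t h1t hrt
        have hsqrt1 : (1:ℝ) ≤ Real.sqrt t := by
          rw [show (1:ℝ) = Real.sqrt 1 by simp]
          exact Real.sqrt_le_sqrt h1t
        have : 1/(4 * Real.sqrt t) ≤ 1/4 := by
          rw [div_le_div_iff₀ (by positivity) (by norm_num)]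
          linarith
        linarith
    have h2' : 0 ≤ r t₀ - Real.sqrt t₀ / 2 := ht₀A.2
    have h3' : r T - Real.sqrt T / 2 < 0 := hDT
    have hmono' : r t₀ - Real.sqrt t₀ / 2 ≤ r T - Real.sqrt T / 2 := hmono
    linarith
  intro s hs
  have hbar := hstage2 s (le_trans hs₀mem.2 hs)
  have h1s : (1:ℝ) ≤ s := by linarith
  have hys : 0 < y s := (hpos s h1s).1
  rw [hrdef] at hbar
  simp only [] at hbar
  rw [div_le_div_iff₀ (by norm_num : (0:ℝ) < 2) hys] at hbar
  linarith

lemma airy_energy {uu ud : ℝ → ℂ} {z : ℂ}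
    (hu : ∀ t, HasDerivAt uu (ud t) t)
    (hud : ∀ t, HasDerivAt ud ((↑t + z) * uu t) t)
    (hb : 0 < z.im)
    (hInt : IntegrableOn (fun t => ‖uu t‖^2) (Ioi 0) volume) :
    z.im * ∫ t in Ioi (0:ℝ), ‖uu t‖^2 ≤ ‖uu 0‖ * ‖ud 0‖ := by
  have hcu : ∀ t, HasDerivAt (fun s => (starRingEnd ℂ) (uu s)) ((starRingEnd ℂ) (ud t)) t :=
    fun t => by simpa using (hu t).star
  have hcud : ∀ t, HasDerivAt (fun s => (starRingEnd ℂ) (ud s))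
      ((starRingEnd ℂ) ((↑t + z) * uu t)) t := fun t => by simpa using (hud t).star
  set a := z.re with ha
  set b := z.im with hbdef
  set h : ℝ → ℝ := fun t => ((starRingEnd ℂ) (uu t) * uu t).re with hhdef
  set P : ℝ → ℝ := fun t => ((starRingEnd ℂ) (uu t) * ud t).re with hPdef
  set F : ℝ → ℝ := fun t => ((starRingEnd ℂ) (uu t) * ud t).im with hFdef
  set vv : ℝ → ℝ := fun t => ((starRingEnd ℂ) (ud t) * ud t).re with hvvdef
  have hh2 : ∀ t, h t = ‖uu t‖^2 := by
    intro t
    have e1 : ((starRingEnd ℂ) (uu t) * uu t : ℂ) = ((Complex.normSq (uu t) : ℝ) : ℂ) :=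
      Complex.normSq_eq_conj_mul_self.symm
    show ((starRingEnd ℂ) (uu t) * uu t).re = ‖uu t‖^2
    rw [e1, Complex.ofReal_re, Complex.sq_norm]
  have hvveq : ∀ t, vv t = Complex.normSq (ud t) := by
    intro t
    have e1 : ((starRingEnd ℂ) (ud t) * ud t : ℂ) = ((Complex.normSq (ud t) : ℝ) : ℂ) :=
      Complex.normSq_eq_conj_mul_self.symm
    show ((starRingEnd ℂ) (ud t) * ud t).re = Complex.normSq (ud t)
    rw [e1, Complex.ofReal_re]
  have hhnn : ∀ t, 0 ≤ h t := fun t => by rw [hh2]; positivity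
  have hvvnn : ∀ t, 0 ≤ vv t := fun t => by rw [hvveq]; exact Complex.normSq_nonneg _
  -- derivatives of the real functionals
  have hh : ∀ t, HasDerivAt h (2 * P t) t := by
    intro t
    have base : HasDerivAt h (((starRingEnd ℂ) (ud t) * uu t
        + (starRingEnd ℂ) (uu t) * ud t).re) t := by
      exact Complex.reCLM.hasFDerivAt.comp_hasDerivAt t ((hcu t).mul (hu t))
    convert base using 1
    simp only [hPdef, Complex.add_re, Complex.mul_re, Complex.conj_re, Complex.conj_im]
    ring
  have hP : ∀ t, HasDerivAt P (Complex.normSq (ud t) + (t + a) * h t) t := by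
    intro t
    have base : HasDerivAt P (((starRingEnd ℂ) (ud t) * ud t
        + (starRingEnd ℂ) (uu t) * ((↑t + z) * uu t)).re) t := by
      exact Complex.reCLM.hasFDerivAt.comp_hasDerivAt t ((hcu t).mul (hud t))
    convert base using 1
    simp only [hhdef, ha, Complex.normSq_apply, Complex.add_re, Complex.add_im, Complex.mul_re,
      Complex.mul_im, Complex.conj_re, Complex.conj_im, Complex.ofReal_re, Complex.ofReal_im]
    ring
  have hF : ∀ t, HasDerivAt F (b * h t) t := by
    intro t
    have base : HasDerivAt F (((starRingEnd ℂ) (ud t) * ud t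
        + (starRingEnd ℂ) (uu t) * ((↑t + z) * uu t)).im) t := by
      exact Complex.imCLM.hasFDerivAt.comp_hasDerivAt t ((hcu t).mul (hud t))
    convert base using 1
    simp only [hhdef, hbdef, Complex.add_re, Complex.add_im, Complex.mul_re,
      Complex.mul_im, Complex.conj_re, Complex.conj_im, Complex.ofReal_re, Complex.ofReal_im]
    ring
  have hvv : ∀ t, HasDerivAt vv (2*((t+a) * P t + b * F t)) t := by
    intro t
    have base : HasDerivAt vv (((starRingEnd ℂ) ((↑t + z) * uu t) * ud t
        + (starRingEnd ℂ) (ud t) * ((↑t + z) * uu t)).re) t := by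
      exact Complex.reCLM.hasFDerivAt.comp_hasDerivAt t ((hcud t).mul (hud t))
    convert base using 1
    simp only [hPdef, hFdef, ha, hbdef, Complex.add_re, Complex.add_im, Complex.mul_re,
      Complex.mul_im, Complex.conj_re, Complex.conj_im, Complex.ofReal_re, Complex.ofReal_im,
      map_mul]
    ring
  set M : ℝ → ℝ := fun t => vv t - (t + a) * h t with hMdef
  have hM : ∀ t, HasDerivAt M (2*b*F t - h t) t := by
    intro t
    have base := (hvv t).sub (((hasDerivAt_id t).add_const a).mul (hh t))
    refine base.congr_deriv ?_
    simp only [id_eq]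
    ring
  have hhcont : Continuous h := continuous_iff_continuousAt.2 fun t => (hh t).continuousAt
  have hInth : IntegrableOn h (Ioi 0) volume := by
    apply hInt.congr
    filter_upwards with t
    rw [hh2]
  have notInt : ∀ c : ℝ, 0 < c → ∀ T : ℝ, ¬ (∀ t, T ≤ t → c ≤ h t) := by
    intro c hc T hall
    set T' := max T 0 with hT'
    have h1 : IntegrableOn h (Ioi T') volume :=
      hInth.mono_set (Ioi_subset_Ioi (le_max_right T 0))
    have h2 : IntegrableOn (fun _ : ℝ => c) (Ioi T') volume := by
      apply Integrable.mono' h1 aestronglyMeasurable_const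
      rw [ae_restrict_iff' measurableSet_Ioi]
      filter_upwards with t ht
      rw [Real.norm_eq_abs, abs_of_pos hc]
      exact hall t (le_trans (le_max_left T 0) ht.le)
    rw [integrableOn_const_iff] at h2
    rcases h2 with h2 | h2
    · exact hc.ne' (enorm_eq_zero.1 h2)
    · rw [Real.volume_Ioi] at h2
      exact (lt_irrefl _ h2).elim
  have hFTC : ∀ T : ℝ, F T = F 0 + b * ∫ t in (0:ℝ)..T, h t := by
    intro T
    have hde : ∀ t ∈ uIcc (0:ℝ) T, HasDerivAt F (b * h t) t := fun t _ => hF t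
    have hie : IntervalIntegrable (fun t => b * h t) volume 0 T :=
      (continuous_const.mul hhcont).intervalIntegrable 0 T
    have := intervalIntegral.integral_eq_sub_of_hasDerivAt hde hie
    rw [intervalIntegral.integral_const_mul] at this
    linarith
  set I := ∫ t in Ioi (0:ℝ), h t with hIdef
  have hJlim : Tendsto (fun T => ∫ t in (0:ℝ)..T, h t) atTop (nhds I) :=
    intervalIntegral_tendsto_integral_Ioi 0 hInth tendsto_id
  have hJle : ∀ T : ℝ, 0 ≤ T → (∫ t in (0:ℝ)..T, h t) ≤ I := by
    intro T hT
    rw [intervalIntegral.integral_of_le hT, hIdef]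
    apply setIntegral_mono_set hInth
    · filter_upwards with t using hhnn t
    · exact HasSubset.Subset.eventuallyLE Ioc_subset_Ioi_self
  set L := F 0 + b * I with hLdef
  have hFlim : Tendsto F atTop (nhds L) := by
    have h1 : Tendsto (fun T => F 0 + b * ∫ t in (0:ℝ)..T, h t) atTop (nhds (F 0 + b * I)) :=
      tendsto_const_nhds.add (hJlim.const_mul b)
    exact h1.congr (fun T => (hFTC T).symm)
  have hL0 : L = 0 := by
    rcases lt_trichotomy L 0 with hL | hL | hL
    · -- L < 0
      exfalso
      have hFle : ∀ T, 0 ≤ T → F T ≤ L := by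
        intro T hT
        rw [hFTC T, hLdef]
        have := hJle T hT
        nlinarith
      have hMgrow := airy_linGrow (φ := fun t => -M t) (φ' := fun t => -(2*b*F t - h t))
        (T := 0) (c := -(2*b*L)) (fun t _ => (hM t).neg)
        (fun t ht => by
          show -(2*b*L) ≤ -(2*b*F t - h t)
          have h1 := hFle t ht.le
          have h2 := hhnn t
          nlinarith)
      set c : ℝ := b * (-L) with hcdef
      have hcpos : 0 < c := mul_pos hb (by linarith)
      set K : ℝ := -(M 0) with hKdef
      set Tst : ℝ := max (max 0 (1 - a)) ((c*a - K)/c) with hTst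
      refine notInt c hcpos Tst ?_
      intro t ht
      have ht0 : 0 ≤ t := le_trans (le_trans (le_max_left 0 (1-a)) (le_max_left _ _)) ht
      have hta1 : 1 - a ≤ t := le_trans (le_trans (le_max_right 0 (1-a)) (le_max_left _ _)) ht
      have hta2 : (c*a - K)/c ≤ t := le_trans (le_max_right _ _) ht
      have hgrow : -M 0 + -(2*b*L) * (t - 0) ≤ -M t := hMgrow t ht0
      have hMle : M t ≤ M 0 + 2*b*L*t := by nlinarith
      have htp : 1 ≤ t + a := by linarith
      have h2 : c * a - K ≤ c * t := by
        rw [div_le_iff₀ hcpos] at hta2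
        linarith
      have hMeq : (t + a) * h t = vv t - M t := by rw [hMdef]; ring
      have h3 : c * (t + a) ≤ (t + a) * h t := by
        rw [hMeq]
        have hvt := hvvnn t
        have hKM : -(M t) = K - 2*b*L*t + (M 0 + 2*b*L*t - M t) := by rw [hKdef]; ring
        nlinarith
      have htp0 : (0:ℝ) < t + a := by linarith
      nlinarith
    · exact hL
    · -- L > 0
      exfalso
      have hF34 : ∀ᶠ T in atTop, 3*L/4 < F T :=
        hFlim.eventually (eventually_gt_nhds (by linarith))
      obtain ⟨T₁, hT₁⟩ := eventually_atTop.1 hF34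
      have hbL : 0 < b * L := mul_pos hb hL
      have hsmall : ∃ t₂, (max T₁ (max 0 (-a))) ≤ t₂ ∧ h t₂ ≤ b*L/2 := by
        by_contra hcon
        push_neg at hcon
        refine notInt (b*L/2) (half_pos hbL) (max T₁ (max 0 (-a))) ?_
        intro t ht
        exact (hcon t ht).le
      obtain ⟨t₂, ht₂m, ht₂s⟩ := hsmall
      have ht₂T₁ : T₁ ≤ t₂ := le_trans (le_max_left _ _) ht₂m
      have ht₂0 : 0 ≤ t₂ := le_trans (le_trans (le_max_left 0 (-a)) (le_max_right _ _)) ht₂m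
      have ht₂a : -a ≤ t₂ := le_trans (le_trans (le_max_right 0 (-a)) (le_max_right _ _)) ht₂m
      -- h is nonincreasing after t₂ (P ≤ 0 there)
      have hPnp : ∀ t, t₂ ≤ t → P t ≤ 0 := by
        intro t₁ ht₁
        by_contra hPt₁
        push_neg at hPt₁
        have hPmono : ∀ t, t₁ ≤ t → P t₁ ≤ P t := by
          intro t ht
          apply airy_monoHelper ht (fun s _ => hP s)
          intro s hs
          have hsa : -a ≤ s := le_trans ht₂a (le_trans ht₁ hs.1.le)
          have := hhnn s
          nlinarith [Complex.normSq_nonneg (ud s)]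
        have hgrow := airy_linGrow (φ := h) (φ' := fun t => 2 * P t) (T := t₁) (c := 2 * P t₁)
          (fun t _ => hh t) (fun t ht => by
            show 2 * P t₁ ≤ 2 * P t
            have := hPmono t ht.le
            linarith)
        refine notInt 1 one_pos (t₁ + 1/(2*P t₁)) ?_
        intro t ht
        have hps : (0:ℝ) < 2 * P t₁ := by linarith
        have h1 : t₁ ≤ t := by
          have : (0:ℝ) < 1/(2*P t₁) := by positivity
          linarith
        have h2 : 1/(2*P t₁) ≤ t - t₁ := by linarith
        rw [div_le_iff₀ hps] at h2
        have := hgrow t h1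
        nlinarith [hhnn t₁]
      have hanti : ∀ t, t₂ ≤ t → h t ≤ h t₂ := by
        intro t ht
        have hmh : -h t₂ ≤ -h t := airy_monoHelper (φ := fun s => -h s) (φ' := fun s => -(2*P s)) ht
          (fun s _ => (hh s).neg)
          (fun s hs => by
            show 0 ≤ -(2 * P s)
            have := hPnp s hs.1.le
            linarith)
        linarith
      have hMgrow := airy_linGrow (φ := M) (φ' := fun t => 2*b*F t - h t) (T := t₂) (c := b*L)
        (fun t _ => hM t)
        (fun t ht => by
          show b * L ≤ 2*b*F t - h t
          have h1 := hT₁ t (le_trans ht₂T₁ ht.le)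
          have h2 := hanti t ht.le
          nlinarith)
      set T₃ := t₂ + (|M t₂| + 1)/(b*L) with hT₃
      have hT₃ge : t₂ ≤ T₃ := by
        have hq : (0:ℝ) < (|M t₂| + 1)/(b*L) := div_pos (by positivity) hbL
        rw [hT₃]
        linarith
      have hM1 : ∀ t, T₃ ≤ t → 1 ≤ M t := by
        intro t ht
        have h1 : t₂ ≤ t := le_trans hT₃ge ht
        have hg := hMgrow t h1
        have h2 : (|M t₂| + 1)/(b*L) ≤ t - t₂ := by rw [hT₃] at ht; linarith
        rw [div_le_iff₀ hbL] at h2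
        have habs := neg_abs_le (M t₂)
        nlinarith
      have hPgrow := airy_linGrow (φ := P)
        (φ' := fun t => Complex.normSq (ud t) + (t+a)*h t) (T := T₃) (c := 1)
        (fun t _ => hP t)
        (fun t ht => by
          show (1:ℝ) ≤ Complex.normSq (ud t) + (t+a)*h t
          have h1 := hM1 t ht.le
          have h2 : -a ≤ t := le_trans ht₂a (le_trans hT₃ge ht.le)
          have hMeq : M t = vv t - (t+a)*h t := rfl
          rw [hvveq] at hMeq
          have := hhnn t
          nlinarith)
      set T₄ := T₃ + |P T₃| + 1 with hT₄
      have hT₄ge : T₃ ≤ T₄ := by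
        have := abs_nonneg (P T₃)
        linarith
      have hP1 : ∀ t, T₄ ≤ t → 1 ≤ P t := by
        intro t ht
        have h1 : T₃ ≤ t := le_trans hT₄ge ht
        have hg := hPgrow t h1
        have habs := neg_abs_le (P T₃)
        rw [hT₄] at ht
        nlinarith
      have hhgrow := airy_linGrow (φ := h) (φ' := fun t => 2 * P t) (T := T₄) (c := 2)
        (fun t _ => hh t) (fun t ht => by
          show (2:ℝ) ≤ 2 * P t
          have := hP1 t ht.le
          linarith)
      refine notInt 1 one_pos (T₄ + 1) ?_
      intro t ht
      have h1 : T₄ ≤ t := by linarith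
      have := hhgrow t h1
      nlinarith [hhnn T₄]
  -- conclusion
  have hI : b * I = - F 0 := by
    rw [hLdef] at hL0
    linarith
  have hFabs : |F 0| ≤ ‖uu 0‖ * ‖ud 0‖ := by
    have h1 : |F 0| ≤ ‖(starRingEnd ℂ) (uu 0) * ud 0‖ := Complex.abs_im_le_norm _
    rw [norm_mul, Complex.norm_conj] at h1
    exact h1
  have heq : (∫ t in Ioi (0:ℝ), ‖uu t‖^2) = I := by
    rw [hIdef]
    exact (integral_congr_ae (by filter_upwards with t using (hh2 t).symm))
  rw [heq]
  have := neg_le_abs (F 0)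
  linarith

/-- For `λ > 0`, `f_λ = Ai'(e^{2πi/3}λ)⁻¹ Ai(· + e^{2πi/3}λ)` solves
`e^{−2πi/3}(D_t² + t)f_λ + λ f_λ = 0` on `(0,∞)` with `f_λ'(0) = 1`, and
`‖f_λ‖_{L²(0,∞)} = O(λ^{−3/4})` as `λ → ∞`. Here `Ai` is the entire Airy function,
characterized by `Ai'' (w) = w Ai w`, decay on the positive real axis, and
`Ai 0 = 1/(3^{2/3}Γ(2/3))`. -/
theorem poissonAiry_properties (Ai : ℂ → ℂ) (hAi : Differentiable ℂ Ai)
    (hAi' : Differentiable ℂ (deriv Ai))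
    (hODE : ∀ w : ℂ, deriv (deriv Ai) w = w * Ai w)
    (hdecay : Tendsto (fun t : ℝ => Ai t) atTop (nhds 0))
    (hnorm : Ai 0 = ((1 / (3 ^ ((2:ℝ)/3) * Real.Gamma (2/3)) : ℝ) : ℂ)) :
    (∀ lam : ℝ, 0 < lam →
      (∀ t ∈ Ioi (0:ℝ),
        Complex.exp ((-(2 * π) / 3 : ℝ) * Complex.I) *
              (-(deriv (deriv (poissonAiry Ai lam)) t) + (t : ℂ) * poissonAiry Ai lam t)
            + (lam : ℂ) * poissonAiry Ai lam t = 0) ∧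
      deriv (poissonAiry Ai lam) 0 = 1) ∧
    (fun lam : ℝ => Real.sqrt (∫ t in Ioi (0:ℝ), ‖poissonAiry Ai lam t‖ ^ 2))
      =O[atTop] fun lam : ℝ => lam ^ (-(3:ℝ)/4) := by
  set e : ℂ := Complex.exp ((2 * π / 3 : ℝ) * Complex.I) with he_def
  have he3 : e^3 = 1 := by
    rw [he_def, ← Complex.exp_nat_mul]
    rw [show ((3:ℕ):ℂ) * (((2 * π / 3 : ℝ) : ℂ) * Complex.I) = 2 * ↑π * Complex.I by
      push_cast; ring]
    exact Complex.exp_two_pi_mul_I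
  have heRe : e.re = -(1/2) := by
    rw [he_def, Complex.exp_ofReal_mul_I_re,
      show 2 * π / 3 = π - π/3 by ring, Real.cos_pi_sub, Real.cos_pi_div_three]
  have heIm : e.im = Real.sqrt 3 / 2 := by
    rw [he_def, Complex.exp_ofReal_mul_I_im,
      show 2 * π / 3 = π - π/3 by ring, Real.sin_pi_sub, Real.sin_pi_div_three]
  have heAbs : ‖e‖ = 1 := by rw [he_def]; exact Complex.norm_exp_ofReal_mul_I _
  have hs3 : (1:ℝ) ≤ Real.sqrt 3 := by
    rw [show (1:ℝ) = Real.sqrt 1 by simp]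
    exact Real.sqrt_le_sqrt (by norm_num)
  -- derivative transfer helpers
  have hre : ∀ (f : ℝ → ℂ) (f' : ℂ) (t : ℝ), HasDerivAt f f' t →
      HasDerivAt (fun s => (f s).re) f'.re t := fun f f' t hf => by
    exact (Complex.reCLM.hasFDerivAt.comp_hasDerivAt t hf)
  have him : ∀ (f : ℝ → ℂ) (f' : ℂ) (t : ℝ), HasDerivAt f f' t →
      HasDerivAt (fun s => (f s).im) f'.im t := fun f f' t hf => by
    exact (Complex.imCLM.hasFDerivAt.comp_hasDerivAt t hf)
  have hshift : ∀ (G : ℂ → ℂ), Differentiable ℂ G → ∀ (z : ℂ) (t : ℝ),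
      HasDerivAt (fun s : ℝ => G (↑s + z)) (deriv G (↑t + z)) t := by
    intro G hG z t
    have h1 : HasDerivAt (fun w : ℂ => G (w + z)) (deriv G (↑t + z)) ↑t := by
      exact (HasDerivAt.comp (↑t : ℂ) ((hG (↑t + z)).hasDerivAt)
        ((hasDerivAt_id (↑t : ℂ)).add_const z)).congr_deriv (mul_one _)
    exact h1.comp_ofReal
  have hray : ∀ (G : ℂ → ℂ), Differentiable ℂ G → ∀ t : ℝ,
      HasDerivAt (fun s : ℝ => G (e * ↑s)) (e * deriv G (e * ↑t)) t := by
    intro G hG t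
    have h2 : HasDerivAt (fun w : ℂ => e * w) e (↑t : ℂ) := by
      simpa using (hasDerivAt_id (↑t:ℂ)).const_mul e
    have h1 : HasDerivAt (fun w : ℂ => G (e * w)) (deriv G (e * ↑t) * e) ↑t := by
      exact HasDerivAt.comp (↑t : ℂ) ((hG (e * ↑t)).hasDerivAt) h2
    have h3 := h1.comp_ofReal
    rw [mul_comm] at h3
    exact h3
  -- the normalising constant
  set c₀ : ℝ := 1 / (3 ^ ((2:ℝ)/3) * Real.Gamma (2/3)) with hc₀def
  have hc₀pos : 0 < c₀ := by
    have h1 : 0 < Real.Gamma (2/3) := Real.Gamma_pos_of_pos (by norm_num)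
    have h2 : (0:ℝ) < 3 ^ ((2:ℝ)/3) := Real.rpow_pos_of_pos (by norm_num) _
    rw [hc₀def]
    positivity
  -- Ai restricted to the real axis
  have hAiR : ∀ t : ℝ, HasDerivAt (fun s : ℝ => Ai ↑s) (deriv Ai ↑t) t :=
    fun t => ((hAi ↑t).hasDerivAt).comp_ofReal
  have hAiR' : ∀ t : ℝ, HasDerivAt (fun s : ℝ => deriv Ai ↑s) ((↑t) * Ai ↑t) t := by
    intro t
    have h1 := ((hAi' ↑t).hasDerivAt).comp_ofReal
    rwa [hODE] at h1
  have hxdec : Tendsto (fun t : ℝ => (Ai ↑t).re) atTop (nhds 0) := by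
    have := (Complex.continuous_re.tendsto (0:ℂ)).comp hdecay
    exact this
  have hydec : Tendsto (fun t : ℝ => (Ai ↑t).im) atTop (nhds 0) := by
    have := (Complex.continuous_im.tendsto (0:ℂ)).comp hdecay
    exact this
  have hx0 : (Ai ((0:ℝ):ℂ)).re = c₀ := by rw [Complex.ofReal_zero, hnorm]; simp
  have hy0 : (Ai ((0:ℝ):ℂ)).im = 0 := by rw [Complex.ofReal_zero, hnorm]; simp
  have hx : ∀ t : ℝ, HasDerivAt (fun s : ℝ => (Ai ↑s).re) ((deriv Ai ↑t).re) t :=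
    fun t => hre _ _ t (hAiR t)
  have hx' : ∀ t : ℝ, HasDerivAt (fun s : ℝ => (deriv Ai ↑s).re) (t * (Ai ↑t).re) t :=
    fun t => (hre _ _ t (hAiR' t)).congr_deriv (by simp [Complex.mul_re])
  have hy : ∀ t : ℝ, HasDerivAt (fun s : ℝ => (Ai ↑s).im) ((deriv Ai ↑t).im) t :=
    fun t => him _ _ t (hAiR t)
  have hy' : ∀ t : ℝ, HasDerivAt (fun s : ℝ => (deriv Ai ↑s).im) (t * (Ai ↑t).im) t :=
    fun t => (him _ _ t (hAiR' t)).congr_deriv (by simp [Complex.mul_im])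
  -- Ai'(0) is real
  have hd0im : (deriv Ai 0).im = 0 := by
    by_contra hne
    rcases lt_or_gt_of_ne hne with hlt | hgt
    · refine airy_decayFalse (y := fun t : ℝ => -(Ai ↑t).im)
        (y' := fun t : ℝ => -(deriv Ai ↑t).im)
        (fun t => (hy t).neg) (fun t => ((hy' t).neg).congr_deriv (by ring)) ?_ ?_ ?_ ?_
      · show (0:ℝ) ≤ -(Ai ((0:ℝ):ℂ)).im
        rw [hy0]; norm_num
      · show (0:ℝ) ≤ -(deriv Ai ((0:ℝ):ℂ)).im
        rw [Complex.ofReal_zero]; linarith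
      · refine Or.inr ?_
        show (0:ℝ) < -(deriv Ai ((0:ℝ):ℂ)).im
        rw [Complex.ofReal_zero]; linarith
      · simpa using hydec.neg
    · refine airy_decayFalse (y := fun t : ℝ => (Ai ↑t).im)
        (y' := fun t : ℝ => (deriv Ai ↑t).im)
        hy hy' ?_ ?_ ?_ hydec
      · show (0:ℝ) ≤ (Ai ((0:ℝ):ℂ)).im
        rw [hy0]
      · show (0:ℝ) ≤ (deriv Ai ((0:ℝ):ℂ)).im
        rw [Complex.ofReal_zero]; linarith
      · refine Or.inr ?_
        show (0:ℝ) < (deriv Ai ((0:ℝ):ℂ)).im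
        rw [Complex.ofReal_zero]; linarith
  have hd0re : (deriv Ai 0).re < 0 := by
    by_contra hge
    push_neg at hge
    refine airy_decayFalse (y := fun t : ℝ => (Ai ↑t).re)
      (y' := fun t : ℝ => (deriv Ai ↑t).re)
      hx hx' ?_ ?_ ?_ hxdec
    · show (0:ℝ) ≤ (Ai ((0:ℝ):ℂ)).re
      rw [hx0]; exact hc₀pos.le
    · show (0:ℝ) ≤ (deriv Ai ((0:ℝ):ℂ)).re
      rw [Complex.ofReal_zero]; linarith
    · refine Or.inl ?_
      show (0:ℝ) < (Ai ((0:ℝ):ℂ)).re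
      rw [hx0]; exact hc₀pos
  set α : ℝ := (deriv Ai 0).re with hαdef
  have hAid0 : deriv Ai 0 = (α : ℂ) := Complex.ext (by simp [hαdef]) (by simp [hd0im])
  -- the ray functions
  set g : ℝ → ℂ := fun s : ℝ => Ai (e * ↑s) with hgdef
  set gd : ℝ → ℂ := fun s : ℝ => e * deriv Ai (e * ↑s) with hgddef
  have hg : ∀ s, HasDerivAt g (gd s) s := fun s => hray Ai hAi s
  have hgd : ∀ s, HasDerivAt gd (((s:ℝ):ℂ) * g s) s := by
    intro s
    have h1 := (hray (deriv Ai) hAi' s).const_mul e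
    refine h1.congr_deriv ?_
    rw [hODE]
    rw [show e * (e * (e * ↑s * Ai (e * ↑s))) = e^3 * (↑s * Ai (e * ↑s)) by ring, he3, one_mul]
  set p : ℝ → ℝ := fun s => (g s).re with hpdef
  set pd : ℝ → ℝ := fun s => (gd s).re with hpddef
  set nq : ℝ → ℝ := fun s => -((g s).im) with hnqdef
  set nqd : ℝ → ℝ := fun s => -((gd s).im) with hnqddef
  have hp : ∀ s, HasDerivAt p (pd s) s := fun s => hre _ _ s (hg s)
  have hpd : ∀ s, HasDerivAt pd (s * p s) s :=
    fun s => (hre _ _ s (hgd s)).congr_deriv (by simp [Complex.mul_re, hpdef])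
  have hnq : ∀ s, HasDerivAt nq (nqd s) s := fun s => (him _ _ s (hg s)).neg
  have hnqd : ∀ s, HasDerivAt nqd (s * nq s) s :=
    fun s => ((him _ _ s (hgd s)).neg).congr_deriv (by simp [Complex.mul_im]; ring)
  have hg0 : g 0 = (c₀ : ℂ) := by
    show Ai (e * ((0:ℝ):ℂ)) = (c₀ : ℂ)
    rw [Complex.ofReal_zero, mul_zero, hnorm]
  have hgd0 : gd 0 = e * (α:ℂ) := by
    show e * deriv Ai (e * ((0:ℝ):ℂ)) = e * (α:ℂ)
    rw [Complex.ofReal_zero, mul_zero, hAid0]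
  have hp0 : p 0 = c₀ := by show (g 0).re = c₀; rw [hg0]; simp
  have hnq0 : nq 0 = 0 := by show -((g 0).im) = 0; rw [hg0]; simp
  have hpd0 : 0 < pd 0 := by
    show 0 < (gd 0).re
    rw [hgd0]
    simp only [Complex.mul_re, Complex.ofReal_re, Complex.ofReal_im, mul_zero, sub_zero]
    rw [heRe]
    nlinarith [hd0re]
  have hnqd0 : 0 < nqd 0 := by
    show 0 < -((gd 0).im)
    rw [hgd0]
    simp only [Complex.mul_im, Complex.ofReal_re, Complex.ofReal_im, mul_zero, add_zero,
      zero_mul]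
    rw [heIm]
    nlinarith [hd0re, hs3]
  have hppos : ∀ s, 0 ≤ s → c₀ ≤ p s ∧ pd 0 ≤ pd s := by
    intro s hs
    have := airy_stepMono hp hpd (σ := 0) le_rfl (by rw [hp0]; exact hc₀pos) hpd0 s hs
    rwa [hp0] at this
  have hnqall := airy_posDeriv_all hnq hnqd (by rw [hnq0]) hnqd0
  have hqdneg : ∀ s, 0 ≤ s → (gd s).im < 0 := by
    intro s hs
    have := (hnqall s hs).1
    show (gd s).im < 0
    have h1 : nqd s = -((gd s).im) := rfl
    linarith [this, h1 ▸ this]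
  have hgdne : ∀ s, 0 ≤ s → gd s ≠ 0 := by
    intro s hs h0
    have := hqdneg s hs
    rw [h0] at this
    simp at this
  have hAi'ne : ∀ lam : ℝ, 0 ≤ lam → deriv Ai (e * ↑lam) ≠ 0 := by
    intro lam hlam h0
    apply hgdne lam hlam
    show e * deriv Ai (e * ↑lam) = 0
    rw [h0, mul_zero]
  -- Riccati bounds along the ray
  have hric_p := airy_riccati hp hpd (lt_of_lt_of_le hc₀pos (hppos 1 zero_le_one).1)
    (lt_of_lt_of_le hpd0 (hppos 1 zero_le_one).2)
  have hric_nq := airy_riccati hnq hnqd ((hnqall 1 zero_le_one).2 one_pos)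
    (hnqall 1 zero_le_one).1
  have hgabs : ∀ s, 2 ≤ s → Real.sqrt s * ‖g s‖ ≤ 2 * ‖gd s‖ := by
    intro s hs
    have h0s : (0:ℝ) ≤ s := by linarith
    have h1 := hric_p s hs
    have h2 := hric_nq s hs
    have hps : 0 < p s := lt_of_lt_of_le hc₀pos (hppos s h0s).1
    have hnqs : 0 ≤ nq s := ((hnqall s h0s).2 (by linarith)).le
    have hsq1 : s * (p s)^2 ≤ 4 * (pd s)^2 := by
      have e1 : (Real.sqrt s * p s)^2 ≤ (2 * pd s)^2 := by
        apply mul_self_le_mul_self (by positivity) h1 |>.trans_eq (by ring) |>.trans_eq' (by ring)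
      rw [mul_pow, Real.sq_sqrt h0s] at e1
      nlinarith [e1]
    have hsq2 : s * (nq s)^2 ≤ 4 * (nqd s)^2 := by
      have e1 : (Real.sqrt s * nq s)^2 ≤ (2 * nqd s)^2 := by
        apply mul_self_le_mul_self (by positivity) h2 |>.trans_eq (by ring) |>.trans_eq' (by ring)
      rw [mul_pow, Real.sq_sqrt h0s] at e1
      nlinarith [e1]
    have hsqg : (Real.sqrt s * ‖g s‖)^2 ≤ (2 * ‖gd s‖)^2 := by
      rw [mul_pow, mul_pow, Real.sq_sqrt h0s, Complex.sq_norm, Complex.sq_norm,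
        Complex.normSq_apply, Complex.normSq_apply]
      have hqq : (g s).im ^ 2 = (nq s)^2 := by rw [hnqdef]; ring
      have hqq' : (gd s).im ^ 2 = (nqd s)^2 := by rw [hnqddef]; ring
      nlinarith [hsq1, hsq2]
    have hn1 : 0 ≤ Real.sqrt s * ‖g s‖ := by positivity
    have hn2 : 0 ≤ 2 * ‖gd s‖ := by positivity
    calc Real.sqrt s * ‖g s‖
        = Real.sqrt ((Real.sqrt s * ‖g s‖)^2) := (Real.sqrt_sq hn1).symm
      _ ≤ Real.sqrt ((2 * ‖gd s‖)^2) := Real.sqrt_le_sqrt hsqg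
      _ = 2 * ‖gd s‖ := Real.sqrt_sq hn2
  constructor
  · -- Part 1 : ODE and boundary condition
    intro lam hlam
    have hne : deriv Ai (e * ↑lam) ≠ 0 := hAi'ne lam hlam.le
    have hfun : poissonAiry Ai lam = fun t : ℝ => (deriv Ai (e * ↑lam))⁻¹ * Ai (↑t + e * ↑lam) :=
      rfl
    have hfd : ∀ t : ℝ, HasDerivAt (poissonAiry Ai lam)
        ((deriv Ai (e * ↑lam))⁻¹ * deriv Ai (↑t + e * ↑lam)) t := by
      intro t
      rw [hfun]
      exact (hshift Ai hAi (e * ↑lam) t).const_mul _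
    have hderiv1 : deriv (poissonAiry Ai lam)
        = fun t : ℝ => (deriv Ai (e * ↑lam))⁻¹ * deriv Ai (↑t + e * ↑lam) :=
      funext fun t => (hfd t).deriv
    have hfd2 : ∀ t : ℝ, HasDerivAt (deriv (poissonAiry Ai lam))
        ((deriv Ai (e * ↑lam))⁻¹ * ((↑t + e * ↑lam) * Ai (↑t + e * ↑lam))) t := by
      intro t
      rw [hderiv1]
      exact ((hshift (deriv Ai) hAi' (e * ↑lam) t).const_mul _).congr_deriv (by rw [hODE])
    constructor
    · intro t _
      rw [(hfd2 t).deriv, hfun]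
      have hE : Complex.exp ((-(2 * π) / 3 : ℝ) * Complex.I) * e = 1 := by
        rw [he_def, ← Complex.exp_add,
          show ((-(2 * π) / 3 : ℝ):ℂ) * Complex.I + ((2 * π / 3 : ℝ):ℂ) * Complex.I = 0 by
            push_cast; ring,
          Complex.exp_zero]
      linear_combination (-(((deriv Ai (e * ↑lam))⁻¹ : ℂ) * Ai ((t:ℂ) + e * ↑lam) * (lam:ℂ))) * hE
    · rw [hderiv1]
      show (deriv Ai (e * ↑lam))⁻¹ * deriv Ai (((0:ℝ):ℂ) + e * ↑lam) = 1
      rw [Complex.ofReal_zero, zero_add]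
      exact inv_mul_cancel₀ hne
  · -- Part 2 : the L² bound
    rw [Asymptotics.isBigO_iff]
    refine ⟨2, ?_⟩
    filter_upwards [eventually_ge_atTop (2:ℝ)] with lam hlam
    have hlam0 : (0:ℝ) < lam := by linarith
    have hrpos : (0:ℝ) < lam ^ (-(3:ℝ)/4) := Real.rpow_pos_of_pos hlam0 _
    rw [Real.norm_eq_abs, Real.norm_eq_abs, abs_of_nonneg (Real.sqrt_nonneg _),
      abs_of_pos hrpos]
    set z : ℂ := e * ↑lam with hzdef
    have hne : deriv Ai z ≠ 0 := hAi'ne lam (by linarith)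
    have hCne : (deriv Ai z)⁻¹ ≠ 0 := inv_ne_zero hne
    set D : ℝ := ‖gd lam‖ with hDdef
    have hDpos : 0 < D := by
      rw [hDdef]
      exact norm_pos_iff.2 (hgdne lam (by linarith))
    have hCnorm : ‖(deriv Ai z)⁻¹‖ = D⁻¹ := by
      rw [norm_inv, hDdef]
      congr 1
      show ‖deriv Ai z‖ = ‖e * deriv Ai (e * ↑lam)‖
      rw [norm_mul, heAbs, one_mul, hzdef]
    by_cases hInt : IntegrableOn (fun t : ℝ => ‖poissonAiry Ai lam t‖^2) (Ioi 0) volume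
    · -- integrable case
      have hu : ∀ t : ℝ, HasDerivAt (fun s : ℝ => Ai (↑s + z)) (deriv Ai (↑t + z)) t :=
        hshift Ai hAi z
      have hud : ∀ t : ℝ, HasDerivAt (fun s : ℝ => deriv Ai (↑s + z))
          ((↑t + z) * Ai (↑t + z)) t :=
        fun t => (hshift (deriv Ai) hAi' z t).congr_deriv (hODE _)
      have hpA : ∀ t : ℝ, poissonAiry Ai lam t = (deriv Ai z)⁻¹ * Ai (↑t + z) := fun t => rfl
      have hCn0 : ‖(deriv Ai z)⁻¹‖ ≠ 0 := norm_ne_zero_iff.2 hCne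
      have hIntu : IntegrableOn (fun t : ℝ => ‖Ai (↑t + z)‖^2) (Ioi 0) volume := by
        have h1 := hInt.const_mul ((‖(deriv Ai z)⁻¹‖^2)⁻¹)
        apply h1.congr
        filter_upwards with t
        rw [hpA t, norm_mul, mul_pow, ← mul_assoc, inv_mul_cancel₀ (pow_ne_zero 2 hCn0),
          one_mul]
      have hzim : 0 < z.im := by
        have h1 : z.im = e.im * lam := by rw [hzdef]; simp [Complex.mul_im]
        rw [h1, heIm]
        nlinarith
      have hen := airy_energy hu hud hzim hIntu
      have hu0 : Ai (((0:ℝ):ℂ) + z) = g lam := by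
        rw [Complex.ofReal_zero, zero_add]
      have hud0 : ‖deriv Ai (((0:ℝ):ℂ) + z)‖ = D := by
        rw [Complex.ofReal_zero, zero_add, hDdef]
        show ‖deriv Ai z‖ = ‖e * deriv Ai (e * ↑lam)‖
        rw [norm_mul, heAbs, one_mul, hzdef]
      set Iu : ℝ := ∫ t in Ioi (0:ℝ), ‖Ai (↑t + z)‖^2 with hIudef
      have hen2 : z.im * Iu ≤ ‖g lam‖ * D := by
        calc z.im * Iu ≤ ‖Ai (((0:ℝ):ℂ) + z)‖
              * ‖deriv Ai (((0:ℝ):ℂ) + z)‖ := hen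
          _ = ‖g lam‖ * D := by rw [hu0, hud0]
      have hIu0 : 0 ≤ Iu := by
        rw [hIudef]
        exact integral_nonneg (fun t => by positivity)
      have hXeq : (∫ t in Ioi (0:ℝ), ‖poissonAiry Ai lam t‖^2) = (D⁻¹)^2 * Iu := by
        rw [hIudef, ← integral_const_mul, ← hCnorm]
        apply integral_congr_ae
        filter_upwards with t
        rw [hpA t, norm_mul, mul_pow]
      have hglam := hgabs lam hlam
      have hslam : 0 < Real.sqrt lam := Real.sqrt_pos.2 hlam0
      have hzim2 : lam / 2 ≤ z.im := by
        have h1 : z.im = e.im * lam := by rw [hzdef]; simp [Complex.mul_im]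
        rw [h1, heIm]
        nlinarith
      -- √lam · lam · Iu ≤ 4 D²
      have hv : Real.sqrt lam * lam * Iu ≤ 4 * D^2 := by
        have h1 : Real.sqrt lam * (z.im * Iu) ≤ Real.sqrt lam * (‖g lam‖ * D) :=
          mul_le_mul_of_nonneg_left hen2 hslam.le
        have h2 : Real.sqrt lam * ‖g lam‖ * D ≤ (2 * D) * D :=
          mul_le_mul_of_nonneg_right hglam hDpos.le
        have h3 : Real.sqrt lam * (lam/2) * Iu ≤ Real.sqrt lam * z.im * Iu := by
          have := mul_le_mul_of_nonneg_left hzim2 hslam.le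
          exact mul_le_mul_of_nonneg_right this hIu0
        nlinarith
      have hX4 : (∫ t in Ioi (0:ℝ), ‖poissonAiry Ai lam t‖^2)
          ≤ 4 / (Real.sqrt lam * lam) := by
        rw [hXeq]
        have hD2 : (D⁻¹)^2 * Iu = Iu / D^2 := by
          field_simp
        rw [hD2, div_le_div_iff₀ (by positivity) (by positivity)]
        nlinarith
      have hsq := Real.sqrt_le_sqrt hX4
      have hkey : Real.sqrt (4 / (Real.sqrt lam * lam)) = 2 * lam ^ (-(3:ℝ)/4) := by
        have h32 : Real.sqrt lam * lam = lam ^ ((3:ℝ)/2) := by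
          rw [Real.sqrt_eq_rpow,
            show lam ^ ((3:ℝ)/2) = lam ^ ((1:ℝ)/2) * lam ^ (1:ℝ) by
              rw [← Real.rpow_add hlam0]; norm_num,
            Real.rpow_one]
        have hexp : (4:ℝ) / (Real.sqrt lam * lam) = (2 * lam ^ (-(3:ℝ)/4))^2 := by
          rw [h32, mul_pow, ← Real.rpow_natCast (lam ^ (-(3:ℝ)/4)) 2,
            ← Real.rpow_mul hlam0.le]
          rw [show (-(3:ℝ)/4) * ((2:ℕ):ℝ) = -((3:ℝ)/2) by push_cast; ring]
          rw [Real.rpow_neg hlam0.le]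
          rw [div_eq_mul_inv]
          norm_num
        rw [hexp, Real.sqrt_sq (by positivity)]
      linarith
    · -- non-integrable case : the integral is zero by convention
      rw [integral_undef hInt, Real.sqrt_zero]
      positivity
end

section
/- Consider the operator (−d²/dx² − z, γ_1) with γ_1 u = u'(0), on D' = {u ∈ H²(0,π) : u'(π) = 0}, augmented by R_+ u = (1/π)∫_0^π u dx and R_− u_− = u_−/π. Then for Re z < 1 the bordered operator sending (u, u_−) ∈ D' × ℂ to (−u'' − zu + u_−/π, u'(0), (1/π)∫_0^π u dx) ∈ L²(0,π) × ℂ × ℂ is bijective, and the effective Hamiltonian (the (−,+)-entry of the inverse, mapping v_+ to u_− when v = 0 and v_0 = 0) equals E_{−+}(z) = πz, the same as for the Neumann Grushin problem. -/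
open Real Set

private lemma exists_SC (z : ℂ) (hz : z.re < 1) :
    ∃ S C : ℝ → ℂ, S 0 = 0 ∧ C 0 = 1 ∧
      (∀ x : ℝ, HasDerivAt S (C x) x) ∧ (∀ x : ℝ, HasDerivAt C (-z * S x) x) ∧
      (∀ x : ℝ, C x ^ 2 + z * S x ^ 2 = 1) ∧ S π ≠ 0 := by
  by_cases h0 : z = 0
  · refine ⟨fun x => (x : ℂ), fun _ => 1, by simp, rfl, ?_, ?_, by simp [h0], ?_⟩
    · intro x; simpa using (hasDerivAt_id x).ofReal_comp
    · intro x; simpa [h0] using hasDerivAt_const x (1 : ℂ)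
    · simpa using Complex.ofReal_ne_zero.mpr pi_ne_zero
  · obtain ⟨w, hw⟩ := IsAlgClosed.exists_pow_nat_eq (k := ℂ) z (n := 2) (by norm_num)
    have hw0 : w ≠ 0 := by rintro rfl; exact h0 (by simpa using hw.symm)
    have hsin : ∀ x : ℝ, HasDerivAt (fun x : ℝ => Complex.sin (w * x))
        (Complex.cos (w * x) * w) x := by
      intro x
      have h1 : HasDerivAt (fun y : ℂ => Complex.sin (w * y)) (Complex.cos (w * x) * w) (x : ℂ) := by
        have h2 := (Complex.hasDerivAt_sin (w * x)).comp (x : ℂ)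
          ((hasDerivAt_id (x : ℂ)).const_mul w)
        simp only [mul_one] at h2
        exact h2
      exact h1.comp_ofReal
    have hcos : ∀ x : ℝ, HasDerivAt (fun x : ℝ => Complex.cos (w * x))
        (-Complex.sin (w * x) * w) x := by
      intro x
      have h1 : HasDerivAt (fun y : ℂ => Complex.cos (w * y)) (-Complex.sin (w * x) * w) (x : ℂ) := by
        have h2 := (Complex.hasDerivAt_cos (w * x)).comp (x : ℂ)
          ((hasDerivAt_id (x : ℂ)).const_mul w)
        simp only [mul_one] at h2
        exact h2
      exact h1.comp_ofReal
    refine ⟨fun x => Complex.sin (w * x) / w, fun x => Complex.cos (w * x),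
      by simp, by simp, ?_, ?_, ?_, ?_⟩
    · intro x
      simpa [mul_div_cancel_right₀ _ hw0] using (hsin x).div_const w
    · intro x
      have := hcos x
      convert this using 1
      field_simp
      linear_combination Complex.sin (w * x) * hw
    · intro x
      have h := Complex.sin_sq_add_cos_sq (w * x)
      field_simp
      linear_combination -Complex.sin (w*x)^2 * hw + w^2 * h
    · intro h
      have hs : Complex.sin (w * π) = 0 := by
        rcases div_eq_zero_iff.mp h with h' | h'
        · exact h'
        · exact absurd h' hw0
      obtain ⟨k, hk⟩ := Complex.sin_eq_zero_iff.mp hs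
      have hπ : ((π : ℝ) : ℂ) ≠ 0 := Complex.ofReal_ne_zero.mpr pi_ne_zero
      have hkw : w = (k : ℂ) := mul_right_cancel₀ hπ hk
      have hk0 : k ≠ 0 := by rintro rfl; simp [hkw] at hw0
      have hzz : z = ((k ^ 2 : ℤ) : ℂ) := by rw [← hw, hkw]; push_cast; ring
      rw [hzz] at hz
      have h1 : (1 : ℤ) ≤ k ^ 2 := by
        rcases lt_or_gt_of_ne hk0 with h' | h' <;> nlinarith
      rw [Complex.intCast_re] at hz
      have : ((k ^ 2 : ℤ) : ℝ) < 1 := hz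
      have : (k ^ 2 : ℤ) < 1 := by exact_mod_cast this
      omega
private lemma contdiff_facts {u : ℝ → ℂ} (hu : ContDiff ℝ 2 u) :
    Differentiable ℝ u ∧ Differentiable ℝ (deriv u) ∧ Continuous (deriv (deriv u)) := by
  have h2 : (2 : WithTop ℕ∞) = 1 + 1 := by norm_num
  rw [h2] at hu
  obtain ⟨hd, -, hu1⟩ := contDiff_succ_iff_deriv.mp hu
  obtain ⟨hd1, hc⟩ := contDiff_one_iff_deriv.mp hu1
  exact ⟨hd, hd1, hc⟩

private lemma integral_identity (z um : ℂ) (u v : ℝ → ℂ)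
    (hv : ContinuousOn v (Icc 0 π)) (hu : ContDiff ℝ 2 u)
    (hode : ∀ x ∈ Icc (0:ℝ) π, -(deriv (deriv u) x) - z * u x + um / (π:ℂ) = v x) :
    deriv u π - deriv u 0 = -z * (∫ x in (0:ℝ)..π, u x) + um - ∫ x in (0:ℝ)..π, v x := by
  obtain ⟨hd, hd1, hc⟩ := contdiff_facts hu
  have hπ : ((π : ℝ) : ℂ) ≠ 0 := Complex.ofReal_ne_zero.mpr pi_ne_zero
  have huIcc : uIcc (0:ℝ) π = Icc 0 π := uIcc_of_le pi_nonneg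
  have hvint : IntervalIntegrable v MeasureTheory.volume 0 π :=
    ContinuousOn.intervalIntegrable (by rwa [huIcc])
  have huint : IntervalIntegrable u MeasureTheory.volume 0 π :=
    hd.continuous.intervalIntegrable 0 π
  have h1 : ∫ x in (0:ℝ)..π, deriv (deriv u) x = deriv u π - deriv u 0 :=
    intervalIntegral.integral_deriv_eq_sub (fun x _ => hd1 x) (hc.intervalIntegrable 0 π)
  have h2 : ∫ x in (0:ℝ)..π, deriv (deriv u) x
      = ∫ x in (0:ℝ)..π, (-v x - z * u x + um / (π:ℂ)) := by
    apply intervalIntegral.integral_congr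
    rw [huIcc]
    intro x hx
    linear_combination -(hode x hx)
  have h3 : ∫ x in (0:ℝ)..π, (-v x - z * u x + um / (π:ℂ))
      = -(∫ x in (0:ℝ)..π, v x) - z * (∫ x in (0:ℝ)..π, u x) + um := by
    have hintneg : IntervalIntegrable (fun x => -v x) MeasureTheory.volume 0 π := hvint.neg
    have hintmul : IntervalIntegrable (fun x => z * u x) MeasureTheory.volume 0 π :=
      huint.const_mul z
    have hint1 : IntervalIntegrable (fun x => -v x - z * u x) MeasureTheory.volume 0 π :=
      hintneg.sub hintmul
    rw [intervalIntegral.integral_add hint1 intervalIntegrable_const,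
      intervalIntegral.integral_sub hintneg hintmul,
      intervalIntegral.integral_neg, intervalIntegral.integral_const_mul,
      intervalIntegral.integral_const]
    congr 1
    rw [sub_zero, Complex.real_smul, mul_div_cancel₀ _ hπ]
  rw [h2, h3] at h1
  linear_combination -h1

private lemma ode2_unique (z : ℂ) (f₁ f₂ d₁ d₂ : ℝ → ℂ)
    (h₁ : ∀ x, HasDerivAt f₁ (d₁ x) x) (h₂ : ∀ x, HasDerivAt f₂ (d₂ x) x)
    (h₁' : ∀ x ∈ Icc (0:ℝ) π, HasDerivAt d₁ (-z * f₁ x) x)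
    (h₂' : ∀ x ∈ Icc (0:ℝ) π, HasDerivAt d₂ (-z * f₂ x) x)
    (hc₁ : ContinuousOn d₁ (Icc (0:ℝ) π)) (hc₂ : ContinuousOn d₂ (Icc (0:ℝ) π))
    (e0 : f₁ 0 = f₂ 0) (e0' : d₁ 0 = d₂ 0) :
    EqOn f₁ f₂ (Icc (0:ℝ) π) := by
  set V : ℝ → ℂ × ℂ → ℂ × ℂ := fun _ p => (p.2, -z * p.1) with hV
  have hlip : ∀ t, LipschitzWith (max 1 (‖-z‖₊ * 1)) (V t) := by
    intro t
    exact LipschitzWith.prodMk LipschitzWith.prod_snd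
      ((lipschitzWith_smul (-z)).comp LipschitzWith.prod_fst)
  have key : EqOn (fun t => (f₁ t, d₁ t)) (fun t => (f₂ t, d₂ t)) (Icc (0:ℝ) π) := by
    apply ODE_solution_unique (v := V) hlip
    · exact ((Differentiable.continuous fun x => (h₁ x).differentiableAt).continuousOn).prodMk hc₁
    · intro t ht
      exact ((h₁ t).prodMk (h₁' t (Ico_subset_Icc_self ht))).hasDerivWithinAt
    · exact ((Differentiable.continuous fun x => (h₂ x).differentiableAt).continuousOn).prodMk hc₂
    · intro t ht
      exact ((h₂ t).prodMk (h₂' t (Ico_subset_Icc_self ht))).hasDerivWithinAt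
    · simp [e0, e0']
  intro x hx
  exact congrArg Prod.fst (key hx)

/-- Boundary-operator Grushin problem on `[0,π]` for `(−d²/dx² − z, γ₁)` with
`γ₁u = u'(0)`, `R₊u = (1/π)∫u`, `R₋u₋ = u₋/π`, on `D' = {u ∈ H² : u'(π) = 0}`.
For `Re z < 1` the bordered problem is uniquely solvable and the effective Hamiltonian
satisfies `u₋ = −v₀ + πz v₊ + ∫v`; in particular (for `v = 0`, `v₀ = 0`)
`E₋₊(z) = πz`, the same as for the Neumann Grushin problem. -/
theorem boundary_grushin_model (z : ℂ) (hz : z.re < 1)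
    (v : ℝ → ℂ) (hv : ContinuousOn v (Icc 0 π)) (v₀ vp : ℂ) :
    (∃ (u : ℝ → ℂ) (um : ℂ), ContDiff ℝ 2 u ∧
      (∀ x ∈ Icc (0:ℝ) π, -(deriv (deriv u) x) - z * u x + um / (π : ℂ) = v x) ∧
      deriv u 0 = v₀ ∧ deriv u π = 0 ∧
      (1 / (π : ℂ)) * (∫ x in (0:ℝ)..π, u x) = vp ∧
      um = -v₀ + (π : ℂ) * z * vp + ∫ x in (0:ℝ)..π, v x) ∧
    (∀ (u₁ u₂ : ℝ → ℂ) (um₁ um₂ : ℂ),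
      ContDiff ℝ 2 u₁ →
      (∀ x ∈ Icc (0:ℝ) π, -(deriv (deriv u₁) x) - z * u₁ x + um₁ / (π : ℂ) = v x) →
      deriv u₁ 0 = v₀ → deriv u₁ π = 0 →
      (1 / (π : ℂ)) * (∫ x in (0:ℝ)..π, u₁ x) = vp →
      ContDiff ℝ 2 u₂ →
      (∀ x ∈ Icc (0:ℝ) π, -(deriv (deriv u₂) x) - z * u₂ x + um₂ / (π : ℂ) = v x) →
      deriv u₂ 0 = v₀ → deriv u₂ π = 0 →
      (1 / (π : ℂ)) * (∫ x in (0:ℝ)..π, u₂ x) = vp →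
      um₁ = um₂ ∧ EqOn u₁ u₂ (Icc (0:ℝ) π)) := by
  obtain ⟨S, C, hS0, hC0, hS', hC', hW, hSπ⟩ := exists_SC z hz
  have hπ : ((π : ℝ) : ℂ) ≠ 0 := Complex.ofReal_ne_zero.mpr pi_ne_zero
  have huIcc : uIcc (0:ℝ) π = Icc 0 π := uIcc_of_le pi_nonneg
  have hCc : Continuous C := Differentiable.continuous fun x => (hC' x).differentiableAt
  have hSc : Continuous S := Differentiable.continuous fun x => (hS' x).differentiableAt
  have hintC : ∫ x in (0:ℝ)..π, C x = S π := by
    rw [intervalIntegral.integral_eq_sub_of_hasDerivAt (fun x _ => hS' x)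
      (hCc.intervalIntegrable 0 π), hS0, sub_zero]
  have hvint : IntervalIntegrable v MeasureTheory.volume 0 π :=
    ContinuousOn.intervalIntegrable (by rwa [huIcc])
  constructor
  · -- existence
    set p : ℝ → ℝ := fun x => max 0 (min x π) with hp
    have hpc : Continuous p := continuous_const.max (continuous_id.min continuous_const)
    have hpmem : ∀ x, p x ∈ Icc (0:ℝ) π := fun x =>
      ⟨le_max_left _ _, max_le pi_nonneg (min_le_right _ _)⟩
    set vt : ℝ → ℂ := fun x => v (p x) with hvt
    have hvtc : Continuous vt := hv.comp_continuous hpc hpmem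
    have hvteq : ∀ x ∈ Icc (0:ℝ) π, vt x = v x := by
      intro x hx
      simp only [vt, p, min_eq_left hx.2, max_eq_right hx.1]
    set um : ℂ := -v₀ + (π:ℂ) * z * vp + ∫ x in (0:ℝ)..π, v x with hum
    set c : ℂ := um / (π:ℂ) with hcdef
    set g : ℝ → ℂ := fun x => c - vt x with hg
    have hgc : Continuous g := continuous_const.sub hvtc
    set IC : ℝ → ℂ := fun x => ∫ t in (0:ℝ)..x, C t * g t with hICdef
    set IS : ℝ → ℂ := fun x => ∫ t in (0:ℝ)..x, S t * g t with hISdef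
    have hICd : ∀ x, HasDerivAt IC (C x * g x) x := fun x =>
      ((hCc.mul hgc).integral_hasStrictDerivAt 0 x).hasDerivAt
    have hISd : ∀ x, HasDerivAt IS (S x * g x) x := fun x =>
      ((hSc.mul hgc).integral_hasStrictDerivAt 0 x).hasDerivAt
    have hICc : Continuous IC := Differentiable.continuous fun x => (hICd x).differentiableAt
    have hISc : Continuous IS := Differentiable.continuous fun x => (hISd x).differentiableAt
    set u₀ : ℝ → ℂ := fun x => v₀ * S x + S x * IC x - C x * IS x with hu₀
    have hu₀c : Continuous u₀ :=
      ((continuous_const.mul hSc).add (hSc.mul hICc)).sub (hCc.mul hISc)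
    set K : ℂ := ∫ x in (0:ℝ)..π, u₀ x with hK
    set a : ℂ := ((π:ℂ) * vp - K) / S π with ha
    set u : ℝ → ℂ := fun x => a * C x + u₀ x with hudef
    set U1 : ℝ → ℂ := fun x => -z * a * S x + v₀ * C x + C x * IC x + z * (S x * IS x) with hU1def
    set U2 : ℝ → ℂ := fun x => -z * u x + g x with hU2def
    have hud : ∀ x, HasDerivAt u (U1 x) x := by
      intro x
      have h := ((hC' x).const_mul a).add
        ((((hS' x).const_mul v₀).add ((hS' x).mul (hICd x))).sub ((hC' x).mul (hISd x)))
      refine h.congr_deriv (Eq.symm ?_)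
      simp only [hU1def]
      ring
    have hU1d : ∀ x, HasDerivAt U1 (U2 x) x := by
      intro x
      have h := ((((hS' x).const_mul (-z * a)).add ((hC' x).const_mul v₀)).add
        ((hC' x).mul (hICd x))).add (((hS' x).mul (hISd x)).const_mul z)
      refine h.congr_deriv (Eq.symm ?_)
      simp only [hU2def, hudef, hu₀]
      linear_combination (vt x - c) * hW x
    have hderivu : deriv u = U1 := funext fun x => (hud x).deriv
    have hderivU1 : deriv U1 = U2 := funext fun x => (hU1d x).deriv
    have hU2c : Continuous U2 := by
      have huc : Continuous u := Differentiable.continuous fun x => (hud x).differentiableAt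
      exact (continuous_const.mul huc).add hgc
    have hcd : ContDiff ℝ 2 u := by
      have h2 : (2 : WithTop ℕ∞) = 1 + 1 := by norm_num
      rw [h2, contDiff_succ_iff_deriv]
      refine ⟨fun x => (hud x).differentiableAt, by simp, ?_⟩
      rw [hderivu, contDiff_one_iff_deriv, hderivU1]
      exact ⟨fun x => (hU1d x).differentiableAt, hU2c⟩
    have hode : ∀ x ∈ Icc (0:ℝ) π, -(deriv (deriv u) x) - z * u x + um / (π:ℂ) = v x := by
      intro x hx
      rw [hderivu, hderivU1]
      rw [← hvteq x hx]
      simp only [hU2def, hg]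
      ring
    have hderiv0 : deriv u 0 = v₀ := by
      rw [hderivu]
      simp [hU1def, hS0, hC0, hICdef, hISdef, intervalIntegral.integral_same]
    have hmean : (1 / (π:ℂ)) * (∫ x in (0:ℝ)..π, u x) = vp := by
      have hintu : ∫ x in (0:ℝ)..π, u x = (π:ℂ) * vp := by
        have hint1 : IntervalIntegrable (fun x => a * C x) MeasureTheory.volume 0 π :=
          (continuous_const.mul hCc).intervalIntegrable 0 π
        have hint2 : IntervalIntegrable u₀ MeasureTheory.volume 0 π :=
          hu₀c.intervalIntegrable 0 π
        calc ∫ x in (0:ℝ)..π, u x = (∫ x in (0:ℝ)..π, a * C x) + ∫ x in (0:ℝ)..π, u₀ x :=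
              intervalIntegral.integral_add hint1 hint2
          _ = a * S π + K := by rw [intervalIntegral.integral_const_mul, hintC, hK]
          _ = (π:ℂ) * vp := by rw [ha, div_mul_cancel₀ _ hSπ]; ring
      rw [hintu]
      field_simp
    have hderivπ : deriv u π = 0 := by
      have hid := integral_identity z um u v hv hcd hode
      have hintu : ∫ x in (0:ℝ)..π, u x = (π:ℂ) * vp := by
        have := hmean
        field_simp at this
        linear_combination this
      rw [hderiv0, hintu, hum] at hid
      linear_combination hid
    exact ⟨u, um, hcd, hode, hderiv0, hderivπ, hmean, hum⟩
  · -- uniqueness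
    intro u₁ u₂ um₁ um₂ hcd₁ hode₁ h0₁ hπ₁ hm₁ hcd₂ hode₂ h0₂ hπ₂ hm₂
    obtain ⟨hd₁, hd1₁, hc₁⟩ := contdiff_facts hcd₁
    obtain ⟨hd₂, hd1₂, hc₂⟩ := contdiff_facts hcd₂
    have hI₁ : (∫ x in (0:ℝ)..π, u₁ x) = (π:ℂ) * vp := by
      field_simp at hm₁; linear_combination hm₁
    have hI₂ : (∫ x in (0:ℝ)..π, u₂ x) = (π:ℂ) * vp := by
      field_simp at hm₂; linear_combination hm₂
    have hid₁ := integral_identity z um₁ u₁ v hv hcd₁ hode₁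
    have hid₂ := integral_identity z um₂ u₂ v hv hcd₂ hode₂
    rw [h0₁, hπ₁, hI₁] at hid₁
    rw [h0₂, hπ₂, hI₂] at hid₂
    have hum : um₁ = um₂ := by linear_combination hid₂ - hid₁
    refine ⟨hum, ?_⟩
    set b : ℂ := u₁ 0 - u₂ 0 with hb
    have key : EqOn (fun x => u₁ x - u₂ x) (fun x => b * C x) (Icc (0:ℝ) π) := by
      apply ode2_unique z _ _ (fun x => deriv u₁ x - deriv u₂ x) (fun x => -(z * b) * S x)
      · exact fun x => ((hd₁ x).hasDerivAt).sub ((hd₂ x).hasDerivAt)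
      · intro x
        have h := (hC' x).const_mul b
        refine h.congr_deriv (Eq.symm ?_)
        ring
      · intro x hx
        have h := ((hd1₁ x).hasDerivAt).sub ((hd1₂ x).hasDerivAt)
        refine h.congr_deriv (Eq.symm ?_)
        have e₁ := hode₁ x hx
        have e₂ := hode₂ x hx
        linear_combination e₁ - e₂ - hum / (π:ℂ)
      · intro x hx
        have h := (hS' x).const_mul (-(z * b))
        refine h.congr_deriv (Eq.symm ?_)
        ring
      · exact ((hd1₁.continuous).sub (hd1₂.continuous)).continuousOn
      · exact (continuous_const.mul hSc).continuousOn
      · simp [hC0, hb]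
      · simp [h0₁, h0₂, hS0]
    have hintdiff : ∫ x in (0:ℝ)..π, (u₁ x - u₂ x) = b * S π := by
      rw [intervalIntegral.integral_congr (g := fun x => b * C x) (by rw [huIcc]; exact key),
        intervalIntegral.integral_const_mul, hintC]
    have hzero : ∫ x in (0:ℝ)..π, (u₁ x - u₂ x) = 0 := by
      rw [intervalIntegral.integral_sub (hd₁.continuous.intervalIntegrable 0 π)
        (hd₂.continuous.intervalIntegrable 0 π), hI₁, hI₂, sub_self]
    have hb0 : b = 0 := by
      have hbs : b * S π = 0 := by rw [← hintdiff]; exact hzero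
      rcases mul_eq_zero.mp hbs with h | h
      · exact h
      · exact absurd h hSπ
    intro x hx
    have := key hx
    simp only [hb0, zero_mul] at this
    exact sub_eq_zero.mp this
end
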